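/- arXiv:1710.05731 — 7 statements merged into one kernel-verified Lean document; each statement's English description precedes it below -/
import Mathlib

section
/- If T is an r-uniform hypergraph that can be built hyperedge-by-hyperedge with each new hyperedge intersecting the previous hypergraph in exactly one vertex, then T contains no Berge cycle. -/
/-- `IsTreeList r l` : the list of hyperedges `l` builds an `r`-uniform tree
hyperedge-by-hyperedge, each new hyperedge meeting the union of the previous
hyperedges in exactly one vertex. -/
inductive IsTreeList (r : ℕ) {V : Type*} [DecidableEq V] : List (Finset V) → Prop
  | single (e : Finset V) (he : e.card = r) : IsTreeList r [e]
  | cons (e : Finset V) (l : List (Finset V)) (hl : IsTreeList r l) (he : e.card = r)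
      (hint : (e ∩ l.foldr (· ∪ ·) ∅).card = 1) : IsTreeList r (e :: l)

/-- A Berge cycle in the hypergraph with hyperedge set `E`: distinct vertices
`v_1, …, v_k` and distinct hyperedges `e_1, …, e_k` (with `k ≥ 2`) such that
`v_i, v_{i+1} ∈ e_i` cyclically. -/
def IsBergeCycle {V : Type*} (E : Set (Finset V)) : Prop :=
  ∃ k : ℕ, ∃ v : Fin (k + 2) → V, Function.Injective v ∧
    ∃ e : Fin (k + 2) → Finset V, Function.Injective e ∧ (∀ i, e i ∈ E) ∧
      ∀ i : Fin (k + 2), v i ∈ e i ∧ v (i + 1) ∈ e i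

lemma mem_foldr_union {V : Type*} [DecidableEq V] (l : List (Finset V)) (x : V) :
    x ∈ l.foldr (· ∪ ·) ∅ ↔ ∃ f ∈ l, x ∈ f := by
  induction l with
  | nil => simp
  | cons a t ih => simp [ih]

lemma fin_ne_add_one {n : ℕ} (i : Fin (n + 2)) : i ≠ i + 1 := by
  intro h
  have h1 : (0 : Fin (n + 2)) = 1 := add_left_cancel (a := i) (by simpa using h)
  simpa using h1

theorem stmt_2 (r : ℕ) {V : Type*} [DecidableEq V] (l : List (Finset V))
    (hl : IsTreeList r l) : ¬ IsBergeCycle {e | e ∈ l} := by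
  induction hl with
  | single f hf =>
    rintro ⟨k, v, hv, e, he, hmem, hcyc⟩
    have h0 : e 0 = f := by simpa using hmem 0
    have h1 : e 1 = f := by simpa using hmem 1
    have : (0 : Fin (k + 2)) = 1 := he (h0.trans h1.symm)
    exact absurd (congrArg (Fin.val) this) (by simp)
  | cons f t ht hf hint ih =>
    rintro ⟨k, v, hv, e, he, hmem, hcyc⟩
    by_cases hall : ∀ i, e i ∈ t
    · exact ih ⟨k, v, hv, e, he, hall, hcyc⟩
    · push_neg at hall
      obtain ⟨j, hj⟩ := hall
      have hej : e j = f := by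
        have := hmem j
        simp only [Set.mem_setOf_eq, List.mem_cons] at this
        tauto
      -- v j ∈ e (j-1), v (j+1) ∈ e (j+1), both edges in t
      have hne1 : e (j + 1) ≠ f := fun h => fin_ne_add_one j (he (hej.trans h.symm))
      have hne2 : e (j - 1) ≠ f := by
        intro h
        have : j - 1 = j := he (h.trans hej.symm)
        have : j = j + 1 := by
          have := congrArg (· + 1) this
          simpa [sub_add_cancel] using this
        exact fin_ne_add_one j this
      have hmem1 : e (j + 1) ∈ t := by
        have := hmem (j + 1); simp only [Set.mem_setOf_eq, List.mem_cons] at this; tauto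
      have hmem2 : e (j - 1) ∈ t := by
        have := hmem (j - 1); simp only [Set.mem_setOf_eq, List.mem_cons] at this; tauto
      have hvj : v j ∈ f ∩ t.foldr (· ∪ ·) ∅ := by
        refine Finset.mem_inter.2 ⟨hej ▸ (hcyc j).1, (mem_foldr_union t _).2 ⟨e (j - 1), hmem2, ?_⟩⟩
        have := (hcyc (j - 1)).2
        simpa [sub_add_cancel] using this
      have hvj1 : v (j + 1) ∈ f ∩ t.foldr (· ∪ ·) ∅ := by
        exact Finset.mem_inter.2 ⟨hej ▸ (hcyc j).2, (mem_foldr_union t _).2 ⟨e (j + 1), hmem1, (hcyc (j + 1)).1⟩⟩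
      have : v j = v (j + 1) := by
        obtain ⟨a, ha⟩ := Finset.card_eq_one.1 hint
        rw [ha, Finset.mem_singleton] at hvj hvj1
        rw [hvj, hvj1]
      exact fin_ne_add_one j (hv this)
end

section
/- If T is a connected r-uniform hypergraph in which the removal of any hyperedge (keeping all vertices) results in exactly r connected components, then between any two distinct vertices of T there exists a unique loose path. -/
/-- Reachability in a hypergraph: two vertices are related if they are joined by a
walk along hyperedges (equivalently, by a Berge path). -/
def hReach {V : Type*} (E : Set (Finset V)) : V → V → Prop :=
  Relation.ReflTransGen (fun a b => ∃ e ∈ E, a ∈ e ∧ b ∈ e)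

/-- A hypergraph is connected if every two vertices are joined by a Berge path. -/
def hConn {V : Type*} (E : Set (Finset V)) : Prop := ∀ x y : V, hReach E x y

/-- The number of connected components of the hypergraph with hyperedge set `E`. -/
noncomputable def compCount {V : Type*} (E : Set (Finset V)) : ℕ :=
  Set.ncard {C : Set V | ∃ x : V, C = {y | hReach E x y}}

/-- `IsLoosePathList E es x y` : the list of hyperedges `es` forms a loose path
from `x` to `y` in the hypergraph with hyperedge set `E`: consecutive hyperedges
meet in exactly one vertex, non-consecutive ones are disjoint, and all vertices
are distinct. -/
inductive IsLoosePathList {V : Type*} [DecidableEq V] (E : Set (Finset V)) :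
    List (Finset V) → V → V → Prop
  | single (e : Finset V) (he : e ∈ E) (x y : V) (hx : x ∈ e) (hy : y ∈ e) (hxy : x ≠ y) :
      IsLoosePathList E [e] x y
  | cons (e : Finset V) (he : e ∈ E) (x z y : V) (l : List (Finset V))
      (hl : IsLoosePathList E l z y) (hx : x ∈ e) (hxz : x ≠ z)
      (hint : e ∩ l.foldr (· ∪ ·) ∅ = {z}) : IsLoosePathList E (e :: l) x y

namespace LoosePathAux

variable {V : Type*} [DecidableEq V]

/-- Union of a list of finsets. -/
def UL (l : List (Finset V)) : Finset V := l.foldr (· ∪ ·) ∅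

lemma mem_UL {a : V} : ∀ {l : List (Finset V)}, a ∈ UL l ↔ ∃ g ∈ l, a ∈ g := by
  intro l
  induction l with
  | nil => simp [UL]
  | cons e l ih =>
    simp only [UL, List.foldr_cons, Finset.mem_union, List.mem_cons]
    rw [show l.foldr (· ∪ ·) ∅ = UL l from rfl, ih]
    constructor
    · rintro (h | ⟨g, hg, hag⟩)
      · exact ⟨e, Or.inl rfl, h⟩
      · exact ⟨g, Or.inr hg, hag⟩
    · rintro ⟨g, (rfl | hg), hag⟩
      · exact Or.inl hag
      · exact Or.inr ⟨g, hg, hag⟩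

lemma reach_symm {E : Set (Finset V)} {a b : V} (h : hReach E a b) : hReach E b a :=
  by
    haveI : Std.Symm (fun a b : V => ∃ e ∈ E, a ∈ e ∧ b ∈ e) :=
      ⟨fun _ _ ⟨e, he, ha, hb⟩ => ⟨e, he, hb, ha⟩⟩
    exact Relation.ReflTransGen.symmetric.symm _ _ h

lemma reach_single {E : Set (Finset V)} {e : Finset V} (he : e ∈ E) {a b : V}
    (ha : a ∈ e) (hb : b ∈ e) : hReach E a b :=
  Relation.ReflTransGen.single ⟨e, he, ha, hb⟩

lemma mem_of_inter_eq {e s : Finset V} {z : V} (h : e ∩ s = {z}) : z ∈ e ∧ z ∈ s := by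
  have : z ∈ e ∩ s := h ▸ Finset.mem_singleton_self z
  exact Finset.mem_inter.mp this

section Fintype
variable [Fintype V] {E : Set (Finset V)} {r : ℕ}

/-- Fact A: distinct vertices of an edge `e` lie in distinct components of `E \ {e}`. -/
lemma factA (hc : hConn E) {e : Finset V} (he : e ∈ E) (hre : e.card = r)
    (hcomp : compCount (E \ {e}) = r) :
    ∀ a ∈ e, ∀ b ∈ e, hReach (E \ {e}) a b → a = b := by
  classical
  intro a ha b hb hab
  have hsym : ∀ {u v : V}, hReach (E \ {e}) u v → hReach (E \ {e}) v u :=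
    fun h => reach_symm h
  have claim1 : ∀ x : V, ∃ c ∈ e, hReach (E \ {e}) c x := by
    intro x
    have h := hc a x
    induction h with
    | refl => exact ⟨a, ha, Relation.ReflTransGen.refl⟩
    | tail _ hstep ih =>
      obtain ⟨c, hcmem, rc⟩ := ih
      obtain ⟨f, hf, h1, h2⟩ := hstep
      by_cases hfe : f = e
      · exact ⟨_, hfe ▸ h2, Relation.ReflTransGen.refl⟩
      · exact ⟨c, hcmem, rc.trans (reach_single (Set.mem_diff_singleton.mpr ⟨hf, hfe⟩) h1 h2)⟩
  have hclass_eq : ∀ {u v : V}, hReach (E \ {e}) u v →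
      {y | hReach (E \ {e}) u y} = {y | hReach (E \ {e}) v y} := by
    intro u v huv
    ext w
    exact ⟨fun h => (hsym huv).trans h, fun h => huv.trans h⟩
  have himg : {C : Set V | ∃ x : V, C = {y | hReach (E \ {e}) x y}} =
      (fun c => {y | hReach (E \ {e}) c y}) '' (↑e : Set V) := by
    ext C
    constructor
    · rintro ⟨x, rfl⟩
      obtain ⟨c, hcmem, rc⟩ := claim1 x
      exact ⟨c, hcmem, hclass_eq rc⟩
    · rintro ⟨c, _, rfl⟩
      exact ⟨c, rfl⟩
  have hn : ((fun c => {y | hReach (E \ {e}) c y}) '' (↑e : Set V)).ncard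
      = (↑e : Set V).ncard := by
    rw [← himg, Set.ncard_coe_finset, hre]
    exact hcomp
  have hinj := Set.injOn_of_ncard_image_eq hn (Set.toFinite _)
  exact hinj (Finset.mem_coe.mpr ha) (Finset.mem_coe.mpr hb) (hclass_eq hab)

variable (hu : ∀ e ∈ E, e.card = r) (hc : hConn E)
  (hcomp : ∀ e ∈ E, compCount (E \ {e}) = r)

include hu hc hcomp in
/-- Fact B: two distinct edges meet in at most one vertex. -/
lemma factB {e f : Finset V} (he : e ∈ E) (hf : f ∈ E) (hef : e ≠ f)
    {w : V} (hw : w ∈ e ∩ f) : e ∩ f = {w} := by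
  ext a
  simp only [Finset.mem_singleton]
  constructor
  · intro haef
    obtain ⟨hae, haf⟩ := Finset.mem_inter.mp haef
    obtain ⟨hwe, hwf⟩ := Finset.mem_inter.mp hw
    exact factA hc hf (hu f hf) (hcomp f hf) a haf w hwf
      (reach_single (Set.mem_diff_singleton.mpr ⟨he, hef⟩) hae hwe)
  · rintro rfl; exact hw

end Fintype

variable {E : Set (Finset V)}

lemma path_start_mem {es : List (Finset V)} {x y : V} (h : IsLoosePathList E es x y) :
    x ∈ UL es := by
  cases h with
  | single e he x y hx hy hxy => simpa [UL] using hx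
  | cons e he x z y l hl hx hxz hint =>
    exact mem_UL.mpr ⟨e, List.mem_cons_self, hx⟩

lemma path_end_mem {es : List (Finset V)} {x y : V} (h : IsLoosePathList E es x y) :
    y ∈ UL es := by
  induction h with
  | single e he x y hx hy hxy => simpa [UL] using hy
  | cons e he x z y l hl hx hxz hint ih =>
    obtain ⟨g, hg, hyg⟩ := mem_UL.mp ih
    exact mem_UL.mpr ⟨g, List.mem_cons_of_mem _ hg, hyg⟩

lemma path_head_not_mem {e : Finset V} {l : List (Finset V)} {x z : V}
    (hx : x ∈ e) (hxz : x ≠ z) (hint : e ∩ UL l = {z}) : e ∉ l := by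
  intro hel
  have h1 : e ∩ UL l = e := Finset.inter_eq_left.mpr
    (fun a hae => mem_UL.mpr ⟨e, hel, hae⟩)
  rw [hint] at h1
  have : x ∈ ({z} : Finset V) := h1 ▸ hx
  exact hxz (Finset.mem_singleton.mp this)

lemma path_ne {es : List (Finset V)} {x y : V} (h : IsLoosePathList E es x y) : x ≠ y := by
  induction h with
  | single e he x y hx hy hxy => exact hxy
  | cons e he x z y l hl hx hxz hint ih =>
    intro heq
    have hintU : e ∩ UL l = {z} := hint
    have hxU : x ∈ UL l := by rw [heq]; exact path_end_mem hl
    have h2 : x ∈ e ∩ UL l := Finset.mem_inter.mpr ⟨hx, hxU⟩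
    rw [hintU] at h2
    exact hxz (Finset.mem_singleton.mp h2)

lemma path_ne_nil {es : List (Finset V)} {x y : V} (h : IsLoosePathList E es x y) :
    es ≠ [] := by
  cases h <;> simp

lemma path_connects {es : List (Finset V)} {x y : V} (h : IsLoosePathList E es x y)
    {g : Finset V} (hg : g ∉ es) : hReach (E \ {g}) x y := by
  induction h with
  | single e he x y hx hy hxy =>
    have heg : e ≠ g := fun h' => hg (h' ▸ List.mem_singleton_self e)
    exact reach_single (Set.mem_diff_singleton.mpr ⟨he, heg⟩) hx hy
  | cons e he x z y l hl hx hxz hint ih =>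
    have heg : e ≠ g := fun h' => hg (h' ▸ List.mem_cons_self)
    have hz : z ∈ e := (mem_of_inter_eq hint).1
    exact (reach_single (Set.mem_diff_singleton.mpr ⟨he, heg⟩) hx hz).trans
      (ih (fun h' => hg (List.mem_cons_of_mem _ h')))

section Fintype2
variable [Fintype V] {r : ℕ}
variable (hu : ∀ e ∈ E, e.card = r) (hc : hConn E)
  (hcomp : ∀ e ∈ E, compCount (E \ {e}) = r)

include hu hc hcomp in
lemma path_separates {es : List (Finset V)} {x y : V} (h : IsLoosePathList E es x y) :
    ∀ g ∈ es, ¬ hReach (E \ {g}) x y := by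
  induction h with
  | single e he x y hx hy hxy =>
    intro g hg
    have : g = e := List.mem_singleton.mp hg
    subst this
    intro hr
    exact hxy (factA hc he (hu g he) (hcomp g he) x hx y hy hr)
  | cons e he x z y l hl hx hxz hint ih =>
    intro g hg
    have hz : z ∈ e := (mem_of_inter_eq hint).1
    have hel : e ∉ l := path_head_not_mem hx hxz hint
    rcases List.mem_cons.mp hg with rfl | hgl
    · intro hr
      have hzy : hReach (E \ {g}) z y := path_connects hl hel
      have hxz' : hReach (E \ {g}) x z := hr.trans (reach_symm hzy)
      exact hxz (factA hc he (hu g he) (hcomp g he) x hx z hz hxz')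
    · intro hr
      have heg : e ≠ g := fun h' => hel (h' ▸ hgl)
      have hxz' : hReach (E \ {g}) x z :=
        reach_single (Set.mem_diff_singleton.mpr ⟨he, heg⟩) hx hz
      exact ih g hgl ((reach_symm hxz').trans hr)

include hu hc hcomp in
lemma path_mem_iff {es fs : List (Finset V)} {x y : V}
    (h1 : IsLoosePathList E es x y) (h2 : IsLoosePathList E fs x y) :
    ∀ g, g ∈ es ↔ g ∈ fs := by
  intro g
  constructor
  · intro hg
    by_contra hg2
    exact path_separates hu hc hcomp h1 g hg (path_connects h2 hg2)
  · intro hg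
    by_contra hg2
    exact path_separates hu hc hcomp h2 g hg (path_connects h1 hg2)

end Fintype2

lemma UL_eq_of_mem_iff {l m : List (Finset V)} (h : ∀ g, g ∈ l ↔ g ∈ m) :
    UL l = UL m := by
  ext a
  constructor
  · intro ha
    obtain ⟨g, hg, hag⟩ := mem_UL.mp ha
    exact mem_UL.mpr ⟨g, (h g).mp hg, hag⟩
  · intro ha
    obtain ⟨g, hg, hag⟩ := mem_UL.mp ha
    exact mem_UL.mpr ⟨g, (h g).mpr hg, hag⟩

lemma path_trunc {es : List (Finset V)} {z y : V} (h : IsLoosePathList E es z y) :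
    ∀ x ∈ UL es, x ≠ y → ∃ es2, IsLoosePathList E es2 x y := by
  induction h with
  | single e he z y hz hy hzy =>
    intro x hx hxy
    have hxe : x ∈ e := by simpa [UL] using hx
    exact ⟨[e], .single e he x y hxe hy hxy⟩
  | cons e he z z' y l hl hz hzz' hint ih =>
    intro x hx hxy
    by_cases hxl : x ∈ UL l
    · exact ih x hxl hxy
    · have hxe : x ∈ e := by
        obtain ⟨g, hg, hxg⟩ := mem_UL.mp hx
        rcases List.mem_cons.mp hg with rfl | hgl
        · exact hxg
        · exact absurd (mem_UL.mpr ⟨g, hgl, hxg⟩) hxl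
      have hxz' : x ≠ z' := fun h' => hxl (h' ▸ (mem_of_inter_eq hint).2)
      exact ⟨e :: l, .cons e he x z' y l hl hxe hxz' hint⟩

lemma UL_cons (e : Finset V) (l : List (Finset V)) : UL (e :: l) = e ∪ UL l := rfl

section Fintype3
variable [Fintype V] {r : ℕ}
variable (hu : ∀ e ∈ E, e.card = r) (hc : hConn E)
  (hcomp : ∀ e ∈ E, compCount (E \ {e}) = r)

include hu hc hcomp in
lemma path_extend {es : List (Finset V)} {z y : V} (h : IsLoosePathList E es z y) :
    ∀ e ∈ E, ∀ x ∈ e, x ∉ UL es → y ∉ e → (e ∩ UL es).Nonempty →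
      ∃ es2, IsLoosePathList E es2 x y := by
  induction h with
  | single f hf z y hz hy hzy =>
    intro e he x hx hxU hye hne
    obtain ⟨w, hw⟩ := hne
    have hULf : UL [f] = f := by simp [UL]
    have hw' : w ∈ e ∩ f := by rwa [hULf] at hw
    have hef : e ≠ f := by
      rintro rfl
      exact hxU (by rwa [hULf])
    have hint : e ∩ UL [f] = {w} := by rw [hULf]; exact factB hu hc hcomp he hf hef hw'
    have hwf : w ∈ f := (Finset.mem_inter.mp hw').2
    have hwy : w ≠ y := fun h' => hye (h' ▸ (Finset.mem_inter.mp hw').1)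
    have hxw : x ≠ w := fun h' => hxU (h' ▸ (by rwa [hULf] : w ∈ UL [f]))
    exact ⟨[e, f], .cons e he x w y [f] (.single f hf w y hwf hy hwy) hx hxw hint⟩
  | cons f hf z z' y l hl hz hzz' hint ih =>
    intro e he x hx hxU hye hne
    have hxl : x ∉ UL l := fun h' => hxU (by
      rw [UL_cons]; exact Finset.mem_union_right _ h')
    by_cases h1 : (e ∩ UL l).Nonempty
    · exact ih e he x hx hxl hye h1
    · have hempty : e ∩ UL l = ∅ := Finset.not_nonempty_iff_eq_empty.mp h1
      obtain ⟨w, hw⟩ := hne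
      rw [UL_cons, Finset.inter_union_distrib_left, hempty, Finset.union_empty] at hw
      have hwe : w ∈ e := (Finset.mem_inter.mp hw).1
      have hwf : w ∈ f := (Finset.mem_inter.mp hw).2
      have hef : e ≠ f := by
        rintro rfl
        exact hxU (by rw [UL_cons]; exact Finset.mem_union_left _ hx)
      have hef' : e ∩ f = {w} := factB hu hc hcomp he hf hef hw
      have hz'l : z' ∈ UL l := (mem_of_inter_eq hint).2
      have hwz' : w ≠ z' := by
        rintro rfl
        have : w ∈ e ∩ UL l := Finset.mem_inter.mpr ⟨hwe, hz'l⟩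
        rw [hempty] at this
        exact absurd this (Finset.notMem_empty w)
      have path2 : IsLoosePathList E (f :: l) w y := .cons f hf w z' y l hl hwf hwz' hint
      have hint2 : e ∩ UL (f :: l) = {w} := by
        rw [UL_cons, Finset.inter_union_distrib_left, hempty, Finset.union_empty, hef']
      have hxw : x ≠ w := by
        rintro rfl
        exact hxU (by rw [UL_cons]; exact Finset.mem_union_left _ hwf)
      exact ⟨e :: f :: l, .cons e he x w y (f :: l) path2 hx hxw hint2⟩

include hu hc hcomp in
lemma exists_path {x y : V} (hxy : x ≠ y) : ∃ es, IsLoosePathList E es x y := by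
  have key : ∀ x : V, hReach E x y → x ≠ y → ∃ es, IsLoosePathList E es x y := by
    intro x h
    induction h using Relation.ReflTransGen.head_induction_on with
    | refl => exact fun h' => absurd rfl h'
    | head hstep htail ih =>
      rename_i a c
      intro hxy'
      obtain ⟨e, he, hae, hce⟩ := hstep
      by_cases hye : y ∈ e
      · exact ⟨[e], .single e he _ y hae hye hxy'⟩
      · have hcy : c ≠ y := fun h' => hye (h' ▸ hce)
        obtain ⟨es', hes'⟩ := ih hcy
        by_cases hxU : a ∈ UL es'
        · exact path_trunc hes' a hxU hxy'
        · exact path_extend hu hc hcomp hes' e he a hae hxU hye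
            ⟨c, Finset.mem_inter.mpr ⟨hce, path_start_mem hes'⟩⟩
  exact key x (hc x y) hxy

include hu hc hcomp in
lemma path_unique {es : List (Finset V)} {x y : V} (h : IsLoosePathList E es x y) :
    ∀ fs, IsLoosePathList E fs x y → es = fs := by
  induction h with
  | single e he x y hx hy hxy =>
    intro fs hfs
    have memiff := path_mem_iff hu hc hcomp (IsLoosePathList.single e he x y hx hy hxy) hfs
    cases hfs with
    | single f hf x y hx' hy' hxy' =>
      have : f = e := List.mem_singleton.mp ((memiff f).mpr (List.mem_singleton_self f))
      rw [this]
    | cons f hf x w y m hm hx' hxw hint' =>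
      exfalso
      have hfm : f ∉ m := path_head_not_mem hx' hxw hint'
      have hfe : f = e := List.mem_singleton.mp
        ((memiff f).mpr (List.mem_cons_self))
      obtain ⟨g, hg⟩ := List.exists_mem_of_ne_nil m (path_ne_nil hm)
      have hge : g = e := List.mem_singleton.mp
        ((memiff g).mpr (List.mem_cons_of_mem _ hg))
      exact hfm (by rw [hfe, ← hge]; exact hg)
  | cons e he x z y l hl hx hxz hint ih =>
    intro fs hfs
    have hpath : IsLoosePathList E (e :: l) x y := .cons e he x z y l hl hx hxz hint
    have memiff := path_mem_iff hu hc hcomp hpath hfs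
    have hel : e ∉ l := path_head_not_mem hx hxz hint
    cases hfs with
    | single f hf x y hx' hy' hxy' =>
      exfalso
      have hfe : e = f := List.mem_singleton.mp ((memiff e).mp (List.mem_cons_self))
      obtain ⟨g, hg⟩ := List.exists_mem_of_ne_nil l (path_ne_nil hl)
      have hge : g = f := List.mem_singleton.mp
        ((memiff g).mp (List.mem_cons_of_mem _ hg))
      exact hel (by rw [hfe, ← hge]; exact hg)
    | cons f hf x w y m hm hx' hxw hint' =>
      have hfm : f ∉ m := path_head_not_mem hx' hxw hint'
      have hef : e = f := by
        rcases List.mem_cons.mp ((memiff e).mp (List.mem_cons_self)) with h' | h'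
        · exact h'
        · exfalso
          have hxm : x ∈ UL m := mem_UL.mpr ⟨e, h', hx⟩
          have hint'U : f ∩ UL m = {w} := hint'
          have h3 : x ∈ f ∩ UL m := Finset.mem_inter.mpr ⟨hx', hxm⟩
          rw [hint'U] at h3
          exact hxw (Finset.mem_singleton.mp h3)
      subst hef
      have hlm : ∀ g, g ∈ l ↔ g ∈ m := by
        intro g
        constructor
        · intro hg
          rcases List.mem_cons.mp ((memiff g).mp (List.mem_cons_of_mem _ hg)) with rfl | h'
          · exact absurd hg hel
          · exact h'
        · intro hg
          rcases List.mem_cons.mp ((memiff g).mpr (List.mem_cons_of_mem _ hg)) with rfl | h'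
          · exact absurd hg hfm
          · exact h'
      have hULlm : UL l = UL m := UL_eq_of_mem_iff hlm
      have hzw : z = w := by
        have h1 : e ∩ UL l = {z} := hint
        have h2 : e ∩ UL m = {w} := hint'
        rw [hULlm, h2] at h1
        exact (Finset.singleton_injective h1).symm
      subst hzw
      rw [ih m hm]

end Fintype3

end LoosePathAux

theorem stmt_4 (r : ℕ) {V : Type*} [Fintype V] [DecidableEq V] (E : Set (Finset V))
    (hu : ∀ e ∈ E, e.card = r) (hc : hConn E)
    (hcomp : ∀ e ∈ E, compCount (E \ {e}) = r) :
    ∀ x y : V, x ≠ y → ∃! es : List (Finset V), IsLoosePathList E es x y := by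
  intro x y hxy
  obtain ⟨es, hes⟩ := LoosePathAux.exists_path hu hc hcomp hxy
  exact ⟨es, hes, fun fs hfs => LoosePathAux.path_unique hu hc hcomp hfs es hes⟩
end

section
/- For r-uniform hypergraphs H1 and H2 with c(H2) ≥ t(H1), the hypergraph Ramsey number satisfies R(H1, H2; r) ≥ (χ_w(H1) − 1)(c(H2) − 1) + t(H1). -/
/-- `c(H)`: the order of a largest connected component of the hypergraph. -/
noncomputable def maxCompOrder {V : Type*} [Fintype V] (E : Set (Finset V)) : ℕ :=
  Finset.univ.sup fun x => Set.ncard {y | hReach E x y}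

/-- A weak proper vertex coloring: no hyperedge is monochromatic. -/
def WeakProper {V : Type*} (E : Set (Finset V)) {k : ℕ} (C : V → Fin k) : Prop :=
  ∀ e ∈ E, ∃ x ∈ e, ∃ y ∈ e, C x ≠ C y

/-- `χ_w(H)`: the weak chromatic number. -/
noncomputable def chiW {V : Type*} (E : Set (Finset V)) : ℕ :=
  sInf {k | ∃ C : V → Fin k, WeakProper E C}

/-- `t(H)`: the minimum size of a color class over all weak proper colorings of `H`
with `χ_w(H)` colors. -/
noncomputable def minClass {V : Type*} (E : Set (Finset V)) : ℕ :=
  sInf {m | ∃ C : V → Fin (chiW E), WeakProper E C ∧ ∃ i, m = Set.ncard {v | C v = i}}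

/-- The hypergraph Ramsey number `R(H₁, H₂; r)`: least `p` such that every red/blue
coloring of the hyperedges of `K_p^{(r)}` contains a red copy of `H₁` or a blue copy
of `H₂`. -/
noncomputable def hRamsey2 {V1 V2 : Type*} [DecidableEq V1] [DecidableEq V2]
    (E1 : Set (Finset V1)) (E2 : Set (Finset V2)) : ℕ :=
  sInf {p | ∀ c : Finset (Fin p) → Bool,
    (∃ f : V1 → Fin p, Function.Injective f ∧ ∀ e ∈ E1, c (e.image f) = true) ∨
    (∃ f : V2 → Fin p, Function.Injective f ∧ ∀ e ∈ E2, c (e.image f) = false)}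

open Finset in

/-- Finite hypergraph Ramsey theorem: for every `r` and `n` there is `p` such that
any 2-coloring of the `r`-subsets of a set of size `≥ p` has a monochromatic
subset of size `≥ n`. -/
lemma myRamsey (r : ℕ) : ∀ n : ℕ, ∃ p : ℕ,
    ∀ {α : Type} [DecidableEq α] (s : Finset α) (c : Finset α → Bool),
    p ≤ s.card → ∃ b : Bool, ∃ u ⊆ s, n ≤ u.card ∧
      ∀ e ⊆ u, e.card = r → c e = b := by
  induction r with
  | zero =>
    intro n
    refine ⟨n, ?_⟩
    intro α _ s c hs
    obtain ⟨u, hus, hucard⟩ := Finset.exists_subset_card_eq hs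
    refine ⟨c ∅, u, hus, hucard.ge, ?_⟩
    intro e _ he
    rw [Finset.card_eq_zero] at he
    rw [he]
  | succ r IH =>
    choose q hq using IH
    intro n
    -- iterated sizes
    set N : ℕ → ℕ := fun k => Nat.rec 1 (fun _ ih => 1 + q ih) k with hN
    have hN0 : N 0 = 1 := rfl
    have hNs : ∀ k, N (k + 1) = 1 + q (N k) := fun _ => rfl
    refine ⟨N (2 * n), ?_⟩
    intro α _ s c hs
    -- build the chain
    have chain : ∀ (k : ℕ) (s : Finset α), N k ≤ s.card →
        ∃ (X : ℕ → Finset α) (a : ℕ → α) (b : ℕ → Bool), X 0 ⊆ s ∧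
          ∀ i < k, X (i+1) ⊆ X i ∧ a i ∈ X i ∧ a i ∉ X (i+1) ∧
            ∀ e ⊆ X (i+1), e.card = r → c (insert (a i) e) = b i := by
      intro k
      induction k with
      | zero =>
        intro s hs
        have hne : s.Nonempty := Finset.card_pos.mp (by omega)
        obtain ⟨a0, _⟩ := hne
        exact ⟨fun _ => s, fun _ => a0, fun _ => true, Finset.Subset.refl s,
          fun i hi => absurd hi (Nat.not_lt_zero i)⟩
      | succ k ihk =>
        intro s hs
        rw [hNs] at hs
        have hne : s.Nonempty := Finset.card_pos.mp (by omega)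
        obtain ⟨a0, ha0⟩ := hne
        have hcard' : q (N k) ≤ (s.erase a0).card := by
          rw [Finset.card_erase_of_mem ha0]; omega
        obtain ⟨b0, u, hus, hucard, hmono⟩ :=
          hq (N k) (s.erase a0) (fun e => c (insert a0 e)) hcard'
        obtain ⟨X', a', b', hX0, hprop⟩ := ihk u hucard
        refine ⟨fun i => match i with | 0 => s | (j+1) => X' j,
                fun i => match i with | 0 => a0 | (j+1) => a' j,
                fun i => match i with | 0 => b0 | (j+1) => b' j,
                Finset.Subset.refl s, ?_⟩
        intro i hi
        match i with
        | 0 =>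
          refine ⟨?_, ha0, ?_, ?_⟩
          · exact (hX0.trans hus).trans (Finset.erase_subset a0 s)
          · intro hmem
            exact (Finset.notMem_erase a0 s) (hus (hX0 hmem))
          · intro e he hecard
            exact hmono e (he.trans hX0) hecard
        | (j+1) =>
          exact hprop j (by omega)
    obtain ⟨X, a, b, hX0s, hprop⟩ := chain (2*n) s hs
    -- monotonicity
    have mono : ∀ j ≤ 2*n, ∀ i ≤ j, X j ⊆ X i := by
      intro j hj
      induction j with
      | zero => intro i hi; rw [Nat.le_zero.mp hi]
      | succ j ihj =>
        intro i hi
        rcases Nat.eq_or_lt_of_le hi with rfl | hlt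
        · exact Finset.Subset.refl _
        · exact ((hprop j (by omega)).1).trans (ihj (by omega) i (by omega))
    have hain : ∀ i < 2*n, a i ∈ s := fun i hi =>
      hX0s (mono i (by omega) 0 (by omega) ((hprop i hi).2.1))
    have hainj : ∀ i < 2*n, ∀ j < 2*n, i < j → a i ≠ a j := by
      intro i hi j hj hij heq
      have h1 : a j ∈ X (i+1) := mono j (by omega) (i+1) (by omega) ((hprop j hj).2.1)
      rw [← heq] at h1
      exact (hprop i hi).2.2.1 h1
    -- pigeonhole
    have hsplit := Finset.card_filter_add_card_filter_not
      (s := Finset.range (2*n)) (p := fun i => b i = true)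
    rw [Finset.card_range] at hsplit
    have : n ≤ ((Finset.range (2*n)).filter (fun i => b i = true)).card ∨
        n ≤ ((Finset.range (2*n)).filter (fun i => ¬ b i = true)).card := by omega
    obtain ⟨bb, I, hIdef, hIcard⟩ :
        ∃ (bb : Bool) (I : Finset ℕ), (I = (Finset.range (2*n)).filter (fun i => b i = bb))
          ∧ n ≤ I.card := by
      rcases this with h | h
      · exact ⟨true, _, rfl, h⟩
      · refine ⟨false, _, ?_, h⟩
        congr 1
        ext i
        simp [Bool.not_eq_true]
    have hImem : ∀ i ∈ I, i < 2*n ∧ b i = bb := by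
      intro i hi; rw [hIdef, Finset.mem_filter, Finset.mem_range] at hi; exact hi
    refine ⟨bb, I.image a, ?_, ?_, ?_⟩
    · intro x hx
      obtain ⟨i, hiI, rfl⟩ := Finset.mem_image.mp hx
      exact hain i (hImem i hiI).1
    · have : (I.image a).card = I.card := by
        apply Finset.card_image_of_injOn
        intro i hi j hj heq
        by_contra hne
        rcases Nat.lt_or_ge i j with h | h
        · exact hainj i (hImem i hi).1 j (hImem j hj).1 h heq
        · exact hainj j (hImem j hj).1 i (hImem i hi).1 (by omega) heq.symm
      omega
    · intro e he hecard
      -- find minimal index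
      have heJ : ∀ x ∈ e, ∃ i ∈ I, a i = x := by
        intro x hx
        exact Finset.mem_image.mp (he hx)
      set J : Finset ℕ := I.filter (fun i => a i ∈ e) with hJdef
      have hJne : J.Nonempty := by
        have : e.Nonempty := Finset.card_pos.mp (by omega)
        obtain ⟨x, hx⟩ := this
        obtain ⟨i, hiI, hia⟩ := heJ x hx
        exact ⟨i, Finset.mem_filter.mpr ⟨hiI, by rw [hia]; exact hx⟩⟩
      set i0 := J.min' hJne with hi0def
      have hi0J : i0 ∈ J := J.min'_mem hJne
      have hi0I : i0 ∈ I := (Finset.mem_filter.mp hi0J).1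
      have hi0e : a i0 ∈ e := (Finset.mem_filter.mp hi0J).2
      have hi0lt : i0 < 2*n := (hImem i0 hi0I).1
      have herase : e.erase (a i0) ⊆ X (i0 + 1) := by
        intro x hx
        have hxe : x ∈ e := Finset.mem_of_mem_erase hx
        have hxne : x ≠ a i0 := Finset.ne_of_mem_erase hx
        obtain ⟨j, hjI, rfl⟩ := heJ x hxe
        have hjJ : j ∈ J := Finset.mem_filter.mpr ⟨hjI, hxe⟩
        have hji : i0 ≤ j := J.min'_le j hjJ
        have hjne : j ≠ i0 := fun h => hxne (by rw [h])
        have hjlt : j < 2*n := (hImem j hjI).1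
        exact mono j (by omega) (i0+1) (by omega) ((hprop j hjlt).2.1)
      have hcard : (e.erase (a i0)).card = r := by
        rw [Finset.card_erase_of_mem hi0e, hecard]
        omega
      have := (hprop i0 hi0lt).2.2.2 (e.erase (a i0)) herase hcard
      rw [Finset.insert_erase hi0e] at this
      rw [this, (hImem i0 hi0I).2]


/-- Bound on the size of an "interval" fiber in `Fin n`. -/
lemma fiberBound {n : ℕ} (A B : ℕ) (S : Set (Fin n))
    (h : ∀ v ∈ S, A ≤ v.val ∧ v.val < A + B) : S.ncard ≤ B := by
  classical
  rw [Set.ncard_eq_toFinset_card' S]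
  have hle : S.toFinset.card ≤ (Finset.Ico A (A + B)).card := by
    apply Finset.card_le_card_of_injOn (fun v => v.val)
    · intro v hv
      rw [Finset.mem_coe, Set.mem_toFinset] at hv
      rw [Finset.mem_coe, Finset.mem_Ico]
      exact h v hv
    · intro a _ b _ hab
      exact Fin.ext hab
  rw [Nat.card_Ico] at hle
  omega

/-- If a weak proper coloring has an unused color, one can drop a color. -/
lemma dropColor {V : Type*} (E : Set (Finset V)) {k : ℕ} (C : V → Fin k)
    (hC : ∀ e ∈ E, ∃ x ∈ e, ∃ y ∈ e, C x ≠ C y) (i1 : Fin k) (hemp : ∀ v, C v ≠ i1) :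
    ∃ C' : V → Fin (k - 1), ∀ e ∈ E, ∃ x ∈ e, ∃ y ∈ e, C' x ≠ C' y := by
  have hne : ∀ v, (C v).val ≠ i1.val := fun v h => hemp v (Fin.ext h)
  refine ⟨fun v => ⟨if (C v).val < i1.val then (C v).val else (C v).val - 1, ?_⟩, ?_⟩
  · have h1 := (C v).isLt
    have h2 := i1.isLt
    have h3 := hne v
    split <;> omega
  · intro e he
    obtain ⟨x, hx, y, hy, hxy⟩ := hC e he
    refine ⟨x, hx, y, hy, ?_⟩
    intro heq
    apply hxy
    apply Fin.ext
    have hvx := hne x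
    have hvy := hne y
    have hval := congrArg Fin.val heq
    simp only at hval
    split_ifs at hval <;> omega

theorem stmt_7 (r : ℕ) {V1 V2 : Type*} [Fintype V1] [DecidableEq V1]
    [Fintype V2] [DecidableEq V2] (E1 : Set (Finset V1)) (E2 : Set (Finset V2))
    (h1 : ∀ e ∈ E1, e.card = r) (h2 : ∀ e ∈ E2, e.card = r)
    (hct : minClass E1 ≤ maxCompOrder E2) :
    (chiW E1 - 1) * (maxCompOrder E2 - 1) + minClass E1 ≤ hRamsey2 E1 E2 := by
  classical
  rw [hRamsey2]
  -- Nonemptiness via Ramsey's theorem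
  obtain ⟨p0, hp0⟩ := myRamsey r (max (Fintype.card V1) (Fintype.card V2))
  have hSne : Set.Nonempty {p | ∀ c : Finset (Fin p) → Bool,
      (∃ f : V1 → Fin p, Function.Injective f ∧ ∀ e ∈ E1, c (e.image f) = true) ∨
      (∃ f : V2 → Fin p, Function.Injective f ∧ ∀ e ∈ E2, c (e.image f) = false)} := by
    refine ⟨p0, ?_⟩
    intro col
    obtain ⟨b, u, hus, hucard, hmono⟩ := hp0 (Finset.univ : Finset (Fin p0)) col (by simp)
    cases b with
    | true =>
      left
      have hcard : Fintype.card V1 ≤ u.card := le_trans (le_max_left _ _) hucard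
      obtain ⟨femb, hfr⟩ := Function.Embedding.exists_of_card_le_finset hcard
      refine ⟨femb, femb.injective, ?_⟩
      intro e he
      apply hmono
      · intro x hx
        obtain ⟨a, _, rfl⟩ := Finset.mem_image.mp hx
        exact hfr (Set.mem_range_self a)
      · rw [Finset.card_image_of_injective e femb.injective]
        exact h1 e he
    | false =>
      right
      have hcard : Fintype.card V2 ≤ u.card := le_trans (le_max_right _ _) hucard
      obtain ⟨femb, hfr⟩ := Function.Embedding.exists_of_card_le_finset hcard
      refine ⟨femb, femb.injective, ?_⟩
      intro e he
      apply hmono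
      · intro x hx
        obtain ⟨a, _, rfl⟩ := Finset.mem_image.mp hx
        exact hfr (Set.mem_range_self a)
      · rw [Finset.card_image_of_injective e femb.injective]
        exact h2 e he
  apply le_csInf hSne
  intro p hp
  by_contra hlt
  push_neg at hlt
  -- abbreviations
  have hplt : p + 1 ≤ (chiW E1 - 1) * (maxCompOrder E2 - 1) + minClass E1 := hlt
  -- kk ≥ 1
  have hkk1 : 1 ≤ chiW E1 := by
    by_contra h
    have hk0 : chiW E1 = 0 := by omega
    have hempty : {m | ∃ C : V1 → Fin (chiW E1), WeakProper E1 C ∧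
        ∃ i, m = Set.ncard {v | C v = i}} = ∅ := by
      ext m
      simp only [Set.mem_setOf_eq, Set.mem_empty_iff_false, iff_false]
      rintro ⟨C, _, i, _⟩
      have := i.isLt
      omega
    have ht0 : minClass E1 = 0 := by rw [minClass, hempty, Nat.sInf_empty]
    rw [ht0, hk0] at hplt
    simp at hplt
  -- an optimal coloring exists
  have hkmem : chiW E1 ∈ {k | ∃ C : V1 → Fin k, WeakProper E1 C} := by
    apply Nat.sInf_mem
    by_contra hemp
    rw [Set.not_nonempty_iff_eq_empty] at hemp
    have : chiW E1 = 0 := by rw [chiW, hemp, Nat.sInf_empty]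
    omega
  obtain ⟨C0, hC0⟩ := hkmem
  have httmem : minClass E1 ∈ {m | ∃ C : V1 → Fin (chiW E1), WeakProper E1 C ∧
      ∃ i, m = Set.ncard {v | C v = i}} := by
    apply Nat.sInf_mem
    exact ⟨_, C0, hC0, ⟨0, hkk1⟩, rfl⟩
  obtain ⟨C1, hC1, i1, hti⟩ := httmem
  -- minClass ≥ 1
  have htt1 : 1 ≤ minClass E1 := by
    by_contra h
    have h0 : minClass E1 = 0 := by omega
    rw [h0] at hti
    have hcls : {v | C1 v = i1} = ∅ := (Set.ncard_eq_zero (Set.toFinite _)).mp hti.symm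
    have hvne : ∀ v, C1 v ≠ i1 := by
      intro v hv
      rw [Set.eq_empty_iff_forall_notMem] at hcls
      exact hcls v hv
    obtain ⟨C', hC'⟩ := dropColor E1 C1 hC1 i1 hvne
    have hle : chiW E1 ≤ chiW E1 - 1 := Nat.sInf_le ⟨C', hC'⟩
    omega
  have hcc1 : 1 ≤ maxCompOrder E2 := le_trans htt1 hct
  -- a maximal component
  have hV2ne : Nonempty V2 := by
    by_contra h
    rw [not_nonempty_iff] at h
    have : maxCompOrder E2 = 0 := by
      rw [maxCompOrder, Finset.univ_eq_empty, Finset.sup_empty]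
      rfl
    omega
  obtain ⟨x2, hx2⟩ : ∃ x2 : V2, Set.ncard {y | hReach E2 x2 y} = maxCompOrder E2 := by
    obtain ⟨x, _, hx⟩ := Finset.exists_mem_eq_sup (Finset.univ : Finset V2)
      Finset.univ_nonempty (fun x => Set.ncard {y | hReach E2 x y})
    exact ⟨x, hx.symm⟩
  -- block coloring of Fin p
  set kk := chiW E1 with hkkdef
  set tt := minClass E1 with httdef
  set cc := maxCompOrder E2 with hccdef
  let g : Fin p → Fin kk := fun v => ⟨min (v.val / (cc - 1)) (kk - 1), by
    have := Nat.min_le_right (v.val / (cc - 1)) (kk - 1); omega⟩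
  have hgval : ∀ v : Fin p, (g v).val = min (v.val / (cc - 1)) (kk - 1) := fun v => rfl
  -- p = 0 if cc = 1
  have hp0cc : cc = 1 → p = 0 := by
    intro h
    have h2 : cc - 1 = 0 := by omega
    rw [h2, Nat.mul_zero] at hplt
    omega
  -- fiber bounds
  have hfib_last : {v : Fin p | (g v).val = kk - 1}.ncard ≤ tt - 1 := by
    apply fiberBound ((kk - 1) * (cc - 1)) (tt - 1)
    intro v hv
    rcases Nat.lt_or_ge cc 2 with hc | hc
    · have : cc = 1 := by omega
      have := hp0cc this
      have := v.isLt
      omega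
    · rw [Set.mem_setOf_eq, hgval] at hv
      have hdivge : kk - 1 ≤ v.val / (cc - 1) := by
        rcases Nat.lt_or_ge (v.val / (cc - 1)) (kk - 1) with h | h
        · rw [min_eq_left (le_of_lt h)] at hv; omega
        · exact h
      have hA : (kk - 1) * (cc - 1) ≤ v.val := by
        have := (Nat.le_div_iff_mul_le (by omega : 0 < cc - 1)).mp hdivge
        linarith
      have hB : v.val < (kk - 1) * (cc - 1) + (tt - 1) := by
        have := v.isLt
        omega
      exact ⟨hA, hB⟩
  have hfib_any : ∀ j : Fin kk, {v : Fin p | g v = j}.ncard ≤ cc - 1 := by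
    intro j
    rcases eq_or_ne j.val (kk - 1) with hj | hj
    · have hsub : {v : Fin p | g v = j} ⊆ {v : Fin p | (g v).val = kk - 1} := by
        intro v hv
        rw [Set.mem_setOf_eq] at hv ⊢
        rw [hv, hj]
      have := Set.ncard_le_ncard hsub (Set.toFinite _)
      have := hfib_last
      omega
    · apply fiberBound (j.val * (cc - 1)) (cc - 1)
      intro v hv
      rw [Set.mem_setOf_eq] at hv
      have hval : min (v.val / (cc - 1)) (kk - 1) = j.val := by
        rw [← hgval, hv]
      have hjlt : j.val < kk - 1 := by
        have h1 := Nat.min_le_left (v.val / (cc - 1)) (kk - 1)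
        have h2 := Nat.min_le_right (v.val / (cc - 1)) (kk - 1)
        have := j.isLt
        omega
      have hdiv : v.val / (cc - 1) = j.val := by
        rcases Nat.lt_or_ge (v.val / (cc - 1)) (kk - 1) with h | h
        · rw [min_eq_left (le_of_lt h)] at hval; exact hval
        · rw [min_eq_right h] at hval; omega
      rcases Nat.lt_or_ge cc 2 with hc | hc
      · have : cc = 1 := by omega
        have := hp0cc this
        have := v.isLt
        omega
      · have hdm := Nat.div_add_mod v.val (cc - 1)
        have hm := Nat.mod_lt v.val (show 0 < cc - 1 by omega)
        rw [hdiv] at hdm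
        constructor
        · rw [mul_comm]
          exact Nat.le.intro hdm
        · rw [mul_comm]
          calc v.val = (cc - 1) * j.val + v.val % (cc - 1) := hdm.symm
            _ < (cc - 1) * j.val + (cc - 1) := Nat.add_lt_add_left hm _
  -- the bad coloring
  let col : Finset (Fin p) → Bool := fun s =>
    if (∃ x ∈ s, ∃ y ∈ s, g x ≠ g y) then true else false
  rcases hp col with ⟨f, hfinj, hfred⟩ | ⟨f, hfinj, hfblue⟩
  · -- red copy of H1: gives a weak proper coloring with a too-small class
    have hwp : WeakProper E1 (fun v => g (f v)) := by
      intro e he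
      have hcond : ∃ x ∈ e.image f, ∃ y ∈ e.image f, g x ≠ g y := by
        by_contra hc
        have h := hfred e he
        simp only [col, if_neg hc] at h
        exact Bool.noConfusion h
      obtain ⟨x, hx, y, hy, hxy⟩ := hcond
      obtain ⟨a, ha, rfl⟩ := Finset.mem_image.mp hx
      obtain ⟨b, hb, rfl⟩ := Finset.mem_image.mp hy
      exact ⟨a, ha, b, hb, hxy⟩
    have hlast : (⟨kk - 1, by omega⟩ : Fin kk) = ⟨kk - 1, by omega⟩ := rfl
    set lastj : Fin kk := ⟨kk - 1, by omega⟩ with hlastj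
    have hle : tt ≤ Set.ncard {v : V1 | g (f v) = lastj} := by
      apply Nat.sInf_le
      exact ⟨fun v => g (f v), hwp, lastj, rfl⟩
    have hsmall : Set.ncard {v : V1 | g (f v) = lastj} ≤ tt - 1 := by
      have himg : (f '' {v : V1 | g (f v) = lastj}).ncard
          = Set.ncard {v : V1 | g (f v) = lastj} :=
        Set.ncard_image_of_injective _ hfinj
      have hsub : f '' {v : V1 | g (f v) = lastj} ⊆ {w : Fin p | (g w).val = kk - 1} := by
        rintro w ⟨v, hv, rfl⟩
        rw [Set.mem_setOf_eq] at hv ⊢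
        rw [hv]
      have := Set.ncard_le_ncard hsub (Set.toFinite _)
      omega
    omega
  · -- blue copy of H2: a whole component maps into one block
    have hconst : ∀ y, hReach E2 x2 y → g (f y) = g (f x2) := by
      intro y hy
      induction hy with
      | refl => rfl
      | tail _ hstep ih =>
        obtain ⟨e, he, hb, hc⟩ := hstep
        have hall : ∀ x ∈ e.image f, ∀ y ∈ e.image f, g x = g y := by
          by_contra hcont
          push_neg at hcont
          obtain ⟨x, hx, y, hy', hxy⟩ := hcont
          have h := hfblue e he
          simp only [col, if_pos (⟨x, hx, y, hy', hxy⟩ :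
            ∃ x ∈ e.image f, ∃ y ∈ e.image f, g x ≠ g y)] at h
          exact Bool.noConfusion h
        have := hall _ (Finset.mem_image_of_mem f hc) _ (Finset.mem_image_of_mem f hb)
        rw [this, ih]
    have himg : (f '' {y | hReach E2 x2 y}).ncard = cc := by
      rw [Set.ncard_image_of_injective _ hfinj, hx2]
    have hsub : f '' {y | hReach E2 x2 y} ⊆ {w : Fin p | g w = g (f x2)} := by
      rintro w ⟨y, hy, rfl⟩
      rw [Set.mem_setOf_eq] at hy ⊢
      exact hconst y hy
    have h1' := Set.ncard_le_ncard hsub (Set.toFinite _)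
    have h2' := hfib_any (g (f x2))
    omega
end

section
/- Let H' be a connected r-uniform hypergraph of order m − r + 1 ≥ r, and let H be obtained from H' by adding a free hyperedge (so H has order m). Then R(H, K_n^{(r)}; r) ≤ max{ R(H', K_n^{(r)}; r), R(H, K_{n−1}^{(r)}; r) + m − r + 1 }. -/
/-- `hRamseyOn r S E n` is the Ramsey number `R(H, K_n^{(r)}; r)` where `H` is the
hypergraph with vertex set `S ⊆ V` and hyperedge set `E`. -/
noncomputable def hRamseyOn {V : Type*} [DecidableEq V] (r : ℕ) (S : Finset V)
    (E : Set (Finset V)) (n : ℕ) : ℕ :=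
  sInf {p | ∀ c : Finset (Fin p) → Bool,
    (∃ f : V → Fin p, Set.InjOn f ↑S ∧ ∀ e ∈ E, c (e.image f) = true) ∨
    (∃ g : Fin n → Fin p, Function.Injective g ∧
      ∀ e : Finset (Fin n), e.card = r → c (e.image g) = false)}

def hProp {V : Type*} [DecidableEq V] (r : ℕ) (S : Finset V) (E : Set (Finset V))
    (n p : ℕ) : Prop :=
  ∀ c : Finset (Fin p) → Bool,
    (∃ f : V → Fin p, Set.InjOn f ↑S ∧ ∀ e ∈ E, c (e.image f) = true) ∨
    (∃ g : Fin n → Fin p, Function.Injective g ∧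
      ∀ e : Finset (Fin n), e.card = r → c (e.image g) = false)

lemma hRamseyOn_eq {V : Type*} [DecidableEq V] (r : ℕ) (S : Finset V)
    (E : Set (Finset V)) (n : ℕ) :
    hRamseyOn r S E n = sInf {p | hProp r S E n p} := rfl

lemma hProp_mono_p {V : Type*} [DecidableEq V] {r n p q : ℕ} {S : Finset V}
    {E : Set (Finset V)} (h : hProp r S E n p) (hpq : p ≤ q) : hProp r S E n q := by
  intro c
  have hι : Function.Injective (Fin.castLE hpq) := Fin.castLE_injective hpq
  rcases h (fun s => c (s.image (Fin.castLE hpq))) with ⟨f, hf, he⟩ | ⟨g, hg, he⟩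
  · left
    refine ⟨Fin.castLE hpq ∘ f, hι.injOn.comp hf (Set.mapsTo_univ _ _), fun e hee => ?_⟩
    rw [← Finset.image_image]; exact he e hee
  · right
    refine ⟨Fin.castLE hpq ∘ g, hι.comp hg, fun e hee => ?_⟩
    rw [← Finset.image_image]; exact he e hee

lemma hProp_mono_n {V : Type*} [DecidableEq V] {r n k p : ℕ} {S : Finset V}
    {E : Set (Finset V)} (hkn : k ≤ n) (h : hProp r S E n p) : hProp r S E k p := by
  intro c
  rcases h c with hred | ⟨g, hg, he⟩
  · exact Or.inl hred
  · right
    have hι : Function.Injective (Fin.castLE hkn) := Fin.castLE_injective hkn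
    refine ⟨g ∘ Fin.castLE hkn, hg.comp hι, fun e hee => ?_⟩
    have h1 : (e.image (Fin.castLE hkn)).card = r := by
      rw [Finset.card_image_of_injective _ hι, hee]
    have := he _ h1
    rwa [Finset.image_image] at this

lemma hProp_sub {V : Type*} [DecidableEq V] {r n p : ℕ} {S T : Finset V}
    {E F : Set (Finset V)} (hST : S ⊆ T) (hEF : E ⊆ F)
    (h : hProp r T F n p) : hProp r S E n p := by
  intro c
  rcases h c with ⟨f, hf, he⟩ | hblue
  · exact Or.inl ⟨f, hf.mono (Finset.coe_subset.mpr hST), fun e hee => he e (hEF hee)⟩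
  · exact Or.inr hblue

theorem stmt_10 (r m n : ℕ) {V : Type*} [DecidableEq V]
    -- `H'` is a connected `r`-uniform hypergraph with vertex set `S'` of order `m - r + 1 ≥ r`:
    (S' : Finset V) (E' : Set (Finset V))
    (hu : ∀ e ∈ E', e.card = r) (hsub : ∀ e ∈ E', e ⊆ S')
    (hconn : ∀ x ∈ S', ∀ y ∈ S', hReach E' x y)
    (hcard : S'.card = m - r + 1) (hord : r ≤ m - r + 1)
    -- `H` is obtained from `H'` by adding a free hyperedge `e₀` at the vertex `x`:
    (e₀ : Finset V) (he₀ : e₀.card = r) (x : V) (hx : e₀ ∩ S' = {x}) :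
    hRamseyOn r (S' ∪ e₀) (insert e₀ E') n ≤
      max (hRamseyOn r S' E' n)
        (hRamseyOn r (S' ∪ e₀) (insert e₀ E') (n - 1) + (m - r + 1)) := by
  classical
  -- r must be positive
  have hr : 0 < r := by
    rcases Nat.eq_zero_or_pos r with h0 | h; swap
    · exact h
    exfalso
    have : e₀ = ∅ := Finset.card_eq_zero.mp (by rw [he₀, h0])
    rw [this, Finset.empty_inter] at hx
    exact (Finset.singleton_ne_empty x) hx.symm
  -- dispose of n = 0
  rcases Nat.eq_zero_or_pos n with hn0 | hn
  · subst hn0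
    have h0 : hProp r (S' ∪ e₀) (insert e₀ E') 0 0 := by
      intro c
      right
      refine ⟨Fin.elim0, fun a => a.elim0, fun e he => ?_⟩
      have : e = ∅ := Finset.eq_empty_of_forall_notMem (fun a _ => a.elim0)
      rw [this] at he
      simp at he
      omega
    calc hRamseyOn r (S' ∪ e₀) (insert e₀ E') 0 ≤ 0 := by
          rw [hRamseyOn_eq]; exact Nat.sInf_le h0
      _ ≤ _ := Nat.zero_le _
  -- if the set defining R(H, K_{n-1}) is empty, the LHS set is empty too
  by_cases hB : {p | hProp r (S' ∪ e₀) (insert e₀ E') (n - 1) p}.Nonempty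
  swap
  · have hemp : {p | hProp r (S' ∪ e₀) (insert e₀ E') n p} = ∅ := by
      rw [Set.eq_empty_iff_forall_notMem]
      intro p hp
      exact hB ⟨p, hProp_mono_n (Nat.sub_le n 1) hp⟩
    rw [hRamseyOn_eq, hemp, Nat.sInf_empty]
    exact Nat.zero_le _
  -- if the set defining R(H', K_n) is empty, LHS set is empty too
  by_cases hA : {p | hProp r S' E' n p}.Nonempty
  swap
  · have hemp : {p | hProp r (S' ∪ e₀) (insert e₀ E') n p} = ∅ := by
      rw [Set.eq_empty_iff_forall_notMem]
      intro p hp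
      exact hA ⟨p, hProp_sub Finset.subset_union_left (Set.subset_insert _ _) hp⟩
    rw [hRamseyOn_eq, hemp, Nat.sInf_empty]
    exact Nat.zero_le _
  set A := hRamseyOn r S' E' n with hAdef
  set B' := hRamseyOn r (S' ∪ e₀) (insert e₀ E') (n - 1) with hBdef
  set M := max A (B' + (m - r + 1)) with hMdef
  have hBmem : hProp r (S' ∪ e₀) (insert e₀ E') (n - 1) B' := Nat.sInf_mem hB
  have hAmem : hProp r S' E' n A := Nat.sInf_mem hA
  have hAM : hProp r S' E' n M := hProp_mono_p hAmem (le_max_left _ _)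
  rw [hRamseyOn_eq]
  apply Nat.sInf_le
  intro c
  rcases hAM c with ⟨f, hf, hfe⟩ | hblue
  swap
  · exact Or.inr hblue
  -- red copy of H'
  set F : Finset (Fin M) := S'.image f with hFdef
  have hFcard : F.card = m - r + 1 := by
    rw [hFdef, Finset.card_image_of_injOn hf, hcard]
  have hcompl : B' ≤ (Finset.univ \ F).card := by
    rw [Finset.card_sdiff_of_subset (Finset.subset_univ F), Finset.card_univ, Fintype.card_fin, hFcard]
    have hBM : B' + (m - r + 1) ≤ M := le_max_right _ _
    omega
  obtain ⟨T, hTsub, hTcard⟩ := Finset.exists_subset_card_eq hcompl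
  set jj : Fin B' → Fin M := fun i => ((T.equivFin.symm (Fin.cast hTcard.symm i)) : Fin M)
    with hjjdef
  have hjinj : Function.Injective jj := by
    intro a b hab
    have h1 := T.equivFin.symm.injective (Subtype.coe_injective hab)
    have h2 := congrArg Fin.val h1
    exact Fin.ext h2
  have hjF : ∀ i, jj i ∉ F := by
    intro i
    have : jj i ∈ T := (T.equivFin.symm (Fin.cast hTcard.symm i)).2
    exact (Finset.mem_sdiff.mp (hTsub this)).2
  rcases hBmem (fun s => c (s.image jj)) with ⟨f₁, hf₁, hf₁e⟩ | ⟨g₁, hg₁, hg₁e⟩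
  · -- red copy of H on the complement vertices
    left
    refine ⟨jj ∘ f₁, hjinj.injOn.comp hf₁ (Set.mapsTo_univ _ _), fun e he => ?_⟩
    have := hf₁e e he
    rwa [Finset.image_image] at this
  -- blue K_{n-1} on the complement vertices
  set g₂ : Fin (n - 1) → Fin M := jj ∘ g₁ with hg₂def
  have hg₂ : Function.Injective g₂ := hjinj.comp hg₁
  have hg₂F : ∀ i, g₂ i ∉ F := fun i => hjF _
  have hg₂e : ∀ e : Finset (Fin (n - 1)), e.card = r → c (e.image g₂) = false := by
    intro e he
    have := hg₁e e he
    rwa [Finset.image_image] at this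
  set G : Finset (Fin M) := Finset.univ.image g₂ with hGdef
  have hGF : ∀ w ∈ G, w ∉ F := by
    intro w hw
    obtain ⟨i, _, rfl⟩ := Finset.mem_image.mp hw
    exact hg₂F i
  have hxe₀S : x ∈ e₀ ∩ S' := by rw [hx]; exact Finset.mem_singleton_self x
  have hxS : x ∈ S' := (Finset.mem_inter.mp hxe₀S).2
  have hxe₀ : x ∈ e₀ := (Finset.mem_inter.mp hxe₀S).1
  have hfxF : f x ∈ F := Finset.mem_image_of_mem f hxS
  by_cases hred : ∃ W ⊆ G, W.card = r - 1 ∧ c (insert (f x) W) = true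
  · -- we can extend the red H' to a red H
    obtain ⟨W, hWG, hWcard, hWred⟩ := hred
    have hes : e₀ \ S' = e₀.erase x := by
      ext v
      simp only [Finset.mem_sdiff, Finset.mem_erase]
      constructor
      · rintro ⟨hv, hvS⟩
        refine ⟨fun h => hvS (h ▸ hxS), hv⟩
      · rintro ⟨hvx, hv⟩
        refine ⟨hv, fun hvS => hvx ?_⟩
        have : v ∈ e₀ ∩ S' := Finset.mem_inter.mpr ⟨hv, hvS⟩
        rw [hx] at this
        exact Finset.mem_singleton.mp this
    have hE : (e₀ \ S').card = r - 1 := by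
      rw [hes, Finset.card_erase_of_mem hxe₀, he₀]
    set σ : {v // v ∈ e₀ \ S'} ≃ {w // w ∈ W} :=
      Finset.equivOfCardEq (by rw [hE, hWcard]) with hσdef
    set f' : V → Fin M := fun v => if h : v ∈ e₀ \ S' then (σ ⟨v, h⟩ : Fin M) else f v
      with hf'def
    have hf'S : ∀ v ∈ S', f' v = f v := by
      intro v hv
      have : v ∉ e₀ \ S' := fun h => (Finset.mem_sdiff.mp h).2 hv
      simp only [hf'def, dif_neg this]
    have hf'E : ∀ v (h : v ∈ e₀ \ S'), f' v = (σ ⟨v, h⟩ : Fin M) := by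
      intro v h
      simp only [hf'def, dif_pos h]
    have hf'W : ∀ v (h : v ∈ e₀ \ S'), f' v ∈ W := by
      intro v h
      rw [hf'E v h]
      exact (σ ⟨v, h⟩).2
    left
    refine ⟨f', ?_, ?_⟩
    · -- injectivity on S' ∪ e₀
      intro a ha b hb hab
      have hcase : ∀ v : V, v ∈ (↑(S' ∪ e₀) : Set V) → v ∈ S' ∨ v ∈ e₀ \ S' := by
        intro v hv
        rcases Finset.mem_union.mp (Finset.mem_coe.mp hv) with h | h
        · exact Or.inl h
        · by_cases hvS : v ∈ S'
          · exact Or.inl hvS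
          · exact Or.inr (Finset.mem_sdiff.mpr ⟨h, hvS⟩)
      rcases hcase a ha with haS | haE <;> rcases hcase b hb with hbS | hbE
      · exact hf (Finset.mem_coe.mpr haS) (Finset.mem_coe.mpr hbS)
          (by rwa [hf'S a haS, hf'S b hbS] at hab)
      · exfalso
        rw [hf'S a haS] at hab
        have h1 : f a ∈ F := Finset.mem_image_of_mem f haS
        have h2 : f' b ∈ W := hf'W b hbE
        rw [← hab] at h2
        exact hGF _ (hWG h2) h1
      · exfalso
        rw [hf'S b hbS] at hab
        have h1 : f b ∈ F := Finset.mem_image_of_mem f hbS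
        have h2 : f' a ∈ W := hf'W a haE
        rw [hab] at h2
        exact hGF _ (hWG h2) h1
      · rw [hf'E a haE, hf'E b hbE] at hab
        have := σ.injective (Subtype.coe_injective hab)
        exact congrArg Subtype.val this
    · -- all edges of H are red
      intro e he
      rcases Set.mem_insert_iff.mp he with he0 | heE'
      · -- the free edge e₀
        subst he0
        have himg : e.image f' = insert (f x) W := by
          apply Finset.Subset.antisymm
          · intro w hw
            obtain ⟨v, hv, rfl⟩ := Finset.mem_image.mp hw
            by_cases hvS : v ∈ S'
            · have : v ∈ e ∩ S' := Finset.mem_inter.mpr ⟨hv, hvS⟩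
              rw [hx] at this
              have hvx : v = x := Finset.mem_singleton.mp this
              subst hvx
              rw [hf'S v hvS]
              exact Finset.mem_insert_self _ _
            · have hvE : v ∈ e \ S' := Finset.mem_sdiff.mpr ⟨hv, hvS⟩
              exact Finset.mem_insert_of_mem (hf'W v hvE)
          · intro w hw
            rcases Finset.mem_insert.mp hw with rfl | hwW
            · refine Finset.mem_image.mpr ⟨x, hxe₀, ?_⟩
              exact hf'S x hxS
            · refine Finset.mem_image.mpr ⟨(σ.symm ⟨w, hwW⟩ : V),
                (Finset.mem_sdiff.mp (σ.symm ⟨w, hwW⟩).2).1, ?_⟩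
              rw [hf'E _ (σ.symm ⟨w, hwW⟩).2]
              simp
        rw [himg]
        exact hWred
      · -- old edges of H'
        have himg : e.image f' = e.image f :=
          Finset.image_congr (fun v hv => hf'S v (hsub e heE' hv))
        rw [himg]
        exact hfe e heE'
  · -- all extensions are blue : blue K_n
    have hall : ∀ W ⊆ G, W.card = r - 1 → c (insert (f x) W) = false := by
      intro W h1 h2
      cases hc : c (insert (f x) W)
      · rfl
      · exact absurd ⟨W, h1, h2, hc⟩ hred
    set g' : Fin n → Fin M := fun i => if h : (i : ℕ) < n - 1 then g₂ ⟨i, h⟩ else f x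
      with hg'def
    have hg'inj : Function.Injective g' := by
      intro a b hab
      simp only [hg'def] at hab
      by_cases ha : (a : ℕ) < n - 1 <;> by_cases hb : (b : ℕ) < n - 1
      · rw [dif_pos ha, dif_pos hb] at hab
        have h3 := hg₂ hab
        have h4 := congrArg Fin.val h3
        exact Fin.ext h4
      · rw [dif_pos ha, dif_neg hb] at hab
        exact absurd (hab ▸ hfxF) (hg₂F _)
      · rw [dif_neg ha, dif_pos hb] at hab
        exact absurd (hab ▸ hfxF) (hg₂F _)
      · have h1 := a.isLt
        have h2 := b.isLt
        exact Fin.ext (by omega)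
    have hg'range : ∀ i, g' i ∈ insert (f x) G := by
      intro i
      simp only [hg'def]
      by_cases h : (i : ℕ) < n - 1
      · rw [dif_pos h]
        exact Finset.mem_insert_of_mem (Finset.mem_image_of_mem _ (Finset.mem_univ _))
      · rw [dif_neg h]
        exact Finset.mem_insert_self _ _
    have key : ∀ s : Finset (Fin M), s ⊆ insert (f x) G → s.card = r → c s = false := by
      intro s hs hsc
      by_cases hfx : f x ∈ s
      · have hW : s.erase (f x) ⊆ G := by
          intro w hw
          rcases Finset.mem_insert.mp (hs (Finset.mem_of_mem_erase hw)) with h | h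
          · exact absurd h (Finset.ne_of_mem_erase hw)
          · exact h
        have hWc : (s.erase (f x)).card = r - 1 := by
          rw [Finset.card_erase_of_mem hfx, hsc]
        have := hall _ hW hWc
        rwa [Finset.insert_erase hfx] at this
      · have hsG : s ⊆ G := by
          intro w hw
          rcases Finset.mem_insert.mp (hs hw) with h | h
          · exact absurd (h ▸ hw) hfx
          · exact h
        set e' : Finset (Fin (n - 1)) := Finset.univ.filter (fun i => g₂ i ∈ s) with he'def
        have himg : e'.image g₂ = s := by
          apply Finset.Subset.antisymm
          · intro w hw
            obtain ⟨i, hi, rfl⟩ := Finset.mem_image.mp hw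
            exact (Finset.mem_filter.mp hi).2
          · intro w hw
            obtain ⟨i, _, rfl⟩ := Finset.mem_image.mp (hsG hw)
            exact Finset.mem_image_of_mem _
              (Finset.mem_filter.mpr ⟨Finset.mem_univ _, hw⟩)
        have he'c : e'.card = r := by
          rw [← hsc, ← himg, Finset.card_image_of_injective _ hg₂]
        have := hg₂e e' he'c
        rwa [himg] at this
    right
    refine ⟨g', hg'inj, fun e he => key _ ?_ ?_⟩
    · intro w hw
      obtain ⟨i, _, rfl⟩ := Finset.mem_image.mp hw
      exact hg'range i
    · rw [Finset.card_image_of_injective _ hg'inj, he]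
end

section
/- For all r ≥ 3, the Ramsey number of the unique r-uniform tree T_{2r−1}^{(r)} of order 2r−1 versus K_{r+1}^{(r)} satisfies 2r ≤ R(T_{2r−1}^{(r)}, K_{r+1}^{(r)}; r) ≤ 2r + 1. -/
/-- `hRamsey E r n` is the Ramsey number `R(H, K_n^{(r)}; r)` where `H` is the
hypergraph with vertex type `V` and hyperedge set `E`. -/
noncomputable def hRamsey {V : Type*} [DecidableEq V] (E : Set (Finset V)) (r n : ℕ) : ℕ :=
  sInf {p | ∀ c : Finset (Fin p) → Bool,
    (∃ f : V → Fin p, Function.Injective f ∧ ∀ e ∈ E, c (e.image f) = true) ∨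
    (∃ g : Fin n → Fin p, Function.Injective g ∧
      ∀ e : Finset (Fin n), e.card = r → c (e.image g) = false)}

/-- Bridging lemma: from two `r`-sets `A`, `B` in `Fin p` meeting in exactly one point,
build an injective embedding of `V` sending `e₁` onto `A` and `e₂` onto `B`. -/
lemma bridge {V : Type*} [Fintype V] [DecidableEq V] {p r : ℕ}
    (e₁ e₂ : Finset V) (h1 : e₁.card = r) (h2 : e₂.card = r)
    (hint : (e₁ ∩ e₂).card = 1) (hcover : e₁ ∪ e₂ = Finset.univ)
    (A B : Finset (Fin p)) (hA : A.card = r) (hB : B.card = r)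
    (hAB : (A ∩ B).card = 1) :
    ∃ f : V → Fin p, Function.Injective f ∧ e₁.image f = A ∧ e₂.image f = B := by
  classical
  obtain ⟨v, hv⟩ := Finset.card_eq_one.mp hint
  obtain ⟨w, hw⟩ := Finset.card_eq_one.mp hAB
  have hwAB : w ∈ A ∩ B := by rw [hw]; exact Finset.mem_singleton_self w
  have hwA : w ∈ A := (Finset.mem_inter.mp hwAB).1
  have hwB : w ∈ B := (Finset.mem_inter.mp hwAB).2
  have c1 : (e₁ \ e₂).card = (A \ B).card := by
    have t1 := Finset.card_inter_add_card_sdiff e₁ e₂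
    have t2 := Finset.card_inter_add_card_sdiff A B
    omega
  have c2 : (e₂ \ e₁).card = (B \ A).card := by
    have t1 := Finset.card_inter_add_card_sdiff e₂ e₁
    have t2 := Finset.card_inter_add_card_sdiff B A
    rw [Finset.inter_comm] at t1 t2
    omega
  set α := Finset.equivOfCardEq c1 with hα
  set β := Finset.equivOfCardEq c2 with hβ
  set f : V → Fin p := fun x =>
    if hx : x ∈ e₁ \ e₂ then (α ⟨x, hx⟩ : Fin p)
    else if hx' : x ∈ e₂ \ e₁ then (β ⟨x, hx'⟩ : Fin p) else w with hf
  have hveq : ∀ x : V, x ∉ e₁ \ e₂ → x ∉ e₂ \ e₁ → x = v := by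
    intro x hx hx'
    have hxu : x ∈ e₁ ∪ e₂ := hcover ▸ Finset.mem_univ x
    simp only [Finset.mem_sdiff, not_and, not_not] at hx hx'
    have : x ∈ e₁ ∩ e₂ := by
      rcases Finset.mem_union.mp hxu with h | h
      · exact Finset.mem_inter.mpr ⟨h, hx h⟩
      · exact Finset.mem_inter.mpr ⟨hx' h, h⟩
    rw [hv] at this
    exact Finset.mem_singleton.mp this
  have hmα : ∀ (x : V) (hx : x ∈ e₁ \ e₂), (↑(α ⟨x, hx⟩) : Fin p) ∈ A \ B :=
    fun x hx => (α ⟨x, hx⟩).2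
  have hmβ : ∀ (x : V) (hx : x ∈ e₂ \ e₁), (↑(β ⟨x, hx⟩) : Fin p) ∈ B \ A :=
    fun x hx => (β ⟨x, hx⟩).2
  have tri : ∀ x : V, (∃ hx : x ∈ e₁ \ e₂, f x = ↑(α ⟨x, hx⟩)) ∨
      (∃ hx : x ∈ e₂ \ e₁, f x = ↑(β ⟨x, hx⟩)) ∨ (x = v ∧ f x = w) := by
    intro x
    by_cases hx : x ∈ e₁ \ e₂
    · exact Or.inl ⟨hx, by simp only [hf]; rw [dif_pos hx]⟩
    by_cases hx' : x ∈ e₂ \ e₁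
    · exact Or.inr (Or.inl ⟨hx', by simp only [hf]; rw [dif_neg hx, dif_pos hx']⟩)
    · exact Or.inr (Or.inr ⟨hveq x hx hx', by simp only [hf]; rw [dif_neg hx, dif_neg hx']⟩)
  have hinj : Function.Injective f := by
    intro x y hxy
    rcases tri x with ⟨hx, hfx⟩ | ⟨hx, hfx⟩ | ⟨hx, hfx⟩ <;>
      rcases tri y with ⟨hy, hfy⟩ | ⟨hy, hfy⟩ | ⟨hy, hfy⟩
    · rw [hfx, hfy] at hxy
      have := α.injective (Subtype.ext hxy)
      exact Subtype.mk_eq_mk.mp this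
    · exfalso
      have m1 := Finset.mem_sdiff.mp (hmα x hx)
      have m2 := Finset.mem_sdiff.mp (hmβ y hy)
      rw [hfx, hfy] at hxy
      rw [hxy] at m1
      exact m1.2 m2.1
    · exfalso
      have m1 := Finset.mem_sdiff.mp (hmα x hx)
      rw [hfx, hfy] at hxy
      rw [hxy] at m1
      exact m1.2 hwB
    · exfalso
      have m1 := Finset.mem_sdiff.mp (hmβ x hx)
      have m2 := Finset.mem_sdiff.mp (hmα y hy)
      rw [hfx, hfy] at hxy
      rw [hxy] at m1
      exact m1.2 m2.1
    · rw [hfx, hfy] at hxy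
      have := β.injective (Subtype.ext hxy)
      exact Subtype.mk_eq_mk.mp this
    · exfalso
      have m1 := Finset.mem_sdiff.mp (hmβ x hx)
      rw [hfx, hfy] at hxy
      rw [hxy] at m1
      exact m1.2 hwA
    · exfalso
      have m2 := Finset.mem_sdiff.mp (hmα y hy)
      rw [hfx, hfy] at hxy
      rw [← hxy] at m2
      exact m2.2 hwB
    · exfalso
      have m2 := Finset.mem_sdiff.mp (hmβ y hy)
      rw [hfx, hfy] at hxy
      rw [← hxy] at m2
      exact m2.2 hwA
    · rw [hx, hy]
  have himg1 : e₁.image f = A := by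
    apply Finset.eq_of_subset_of_card_le
    · intro y hy
      obtain ⟨x, hx, rfl⟩ := Finset.mem_image.mp hy
      simp only [hf]
      split_ifs with hx1 hx2
      · exact (Finset.mem_sdiff.mp (hmα x hx1)).1
      · exact absurd hx (Finset.mem_sdiff.mp hx2).2
      · exact hwA
    · rw [Finset.card_image_of_injective _ hinj, h1, hA]
  have himg2 : e₂.image f = B := by
    apply Finset.eq_of_subset_of_card_le
    · intro y hy
      obtain ⟨x, hx, rfl⟩ := Finset.mem_image.mp hy
      simp only [hf]
      split_ifs with hx1 hx2
      · exact absurd hx (Finset.mem_sdiff.mp hx1).2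
      · exact (Finset.mem_sdiff.mp (hmβ x hx2)).1
      · exact hwB
    · rw [Finset.card_image_of_injective _ hinj, h2, hB]
  exact ⟨f, hinj, himg1, himg2⟩

theorem stmt_12 (r : ℕ) (hr : 3 ≤ r) {V : Type*} [Fintype V] [DecidableEq V]
    -- `T_{2r-1}^{(r)}`: two `r`-element hyperedges meeting in exactly one vertex:
    (e₁ e₂ : Finset V) (h1 : e₁.card = r) (h2 : e₂.card = r)
    (hint : (e₁ ∩ e₂).card = 1) (hcover : e₁ ∪ e₂ = Finset.univ) :
    2 * r ≤ hRamsey ({e₁, e₂} : Set (Finset V)) r (r + 1) ∧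
      hRamsey ({e₁, e₂} : Set (Finset V)) r (r + 1) ≤ 2 * r + 1 := by
  classical
  have hcardV : Fintype.card V = 2 * r - 1 := by
    have h := Finset.card_union_add_card_inter e₁ e₂
    rw [hcover, hint, h1, h2] at h
    rw [← Finset.card_univ]
    omega
  -- Upper bound: 2r+1 works.
  have hmem : (2 * r + 1) ∈ {p | ∀ c : Finset (Fin p) → Bool,
      (∃ f : V → Fin p, Function.Injective f ∧
        ∀ e ∈ ({e₁, e₂} : Set (Finset V)), c (e.image f) = true) ∨
      (∃ g : Fin (r + 1) → Fin p, Function.Injective g ∧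
        ∀ e : Finset (Fin (r + 1)), e.card = r → c (e.image g) = false)} := by
    intro c
    by_cases hblue : ∃ g : Fin (r + 1) → Fin (2 * r + 1), Function.Injective g ∧
        ∀ e : Finset (Fin (r + 1)), e.card = r → c (e.image g) = false
    · exact Or.inr hblue
    push_neg at hblue
    -- every (r+1)-set contains a red r-set
    have redin : ∀ S : Finset (Fin (2 * r + 1)), S.card = r + 1 →
        ∃ A, A ⊆ S ∧ A.card = r ∧ c A = true := by
      intro S hS
      set g : Fin (r + 1) → Fin (2 * r + 1) := fun i => (S.orderIsoOfFin hS i : Fin (2 * r + 1))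
        with hgdef
      have hginj : Function.Injective g := by
        intro i j hij
        exact (S.orderIsoOfFin hS).injective (Subtype.coe_injective hij)
      obtain ⟨e, he, hce⟩ := hblue g hginj
      refine ⟨e.image g, ?_, ?_, ?_⟩
      · intro y hy
        obtain ⟨i, _, rfl⟩ := Finset.mem_image.mp hy
        exact (S.orderIsoOfFin hS i).2
      · rw [Finset.card_image_of_injective _ hginj, he]
      · simpa using hce
    left
    have key : ∃ X Y : Finset (Fin (2 * r + 1)), X.card = r ∧ Y.card = r ∧
        (X ∩ Y).card = 1 ∧ c X = true ∧ c Y = true := by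
      by_contra hno
      push_neg at hno
      have hcu : (Finset.univ : Finset (Fin (2 * r + 1))).card = 2 * r + 1 := by simp
      obtain ⟨S₀, _, hS₀⟩ := Finset.exists_subset_card_eq (s := (Finset.univ : Finset (Fin (2 * r + 1))))
        (n := r + 1) (by omega)
      obtain ⟨A, hAS, hA, hcA⟩ := redin S₀ hS₀
      have hCcard : ((Finset.univ : Finset (Fin (2 * r + 1))) \ A).card = r + 1 := by
        rw [Finset.card_sdiff_of_subset (Finset.subset_univ A), hcu, hA]
        omega
      obtain ⟨B, hBC, hB, hcB⟩ := redin _ hCcard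
      have hBnA : ∀ x ∈ B, x ∉ A := fun x hx => (Finset.mem_sdiff.mp (hBC hx)).2
      have hzcard : (((Finset.univ : Finset (Fin (2 * r + 1))) \ A) \ B).card = 1 := by
        rw [Finset.card_sdiff_of_subset hBC, hCcard, hB]
        omega
      obtain ⟨z, hz⟩ := Finset.card_eq_one.mp hzcard
      have hzmem : z ∈ ((Finset.univ : Finset (Fin (2 * r + 1))) \ A) \ B := by
        rw [hz]; exact Finset.mem_singleton_self z
      have hzA : z ∉ A := (Finset.mem_sdiff.mp (Finset.mem_sdiff.mp hzmem).1).2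
      have hzB : z ∉ B := (Finset.mem_sdiff.mp hzmem).2
      obtain ⟨a, ha⟩ := Finset.card_pos.mp (by omega : 0 < A.card)
      obtain ⟨b, hb⟩ := Finset.card_pos.mp (by omega : 0 < B.card)
      have hbz : b ≠ z := fun h => hzB (h ▸ hb)
      have haz : a ≠ z := fun h => hzA (h ▸ ha)
      have hbA : b ∉ A := hBnA b hb
      have haB : a ∉ B := fun h => hBnA a h ha
      -- first auxiliary (r+1)-set
      have hza : z ∉ A.erase a := fun h => hzA (Finset.mem_of_mem_erase h)
      have hbins : b ∉ insert z (A.erase a) := by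
        simp only [Finset.mem_insert]
        rintro (rfl | h)
        · exact hbz rfl
        · exact hbA (Finset.mem_of_mem_erase h)
      have hD₁ : (insert b (insert z (A.erase a))).card = r + 1 := by
        rw [Finset.card_insert_of_notMem hbins, Finset.card_insert_of_notMem hza,
          Finset.card_erase_of_mem ha, hA]
        omega
      obtain ⟨E₁, hE₁D, hE₁card, hcE₁⟩ := redin _ hD₁
      have hbE₁ : b ∉ E₁ := by
        intro hbe
        have hinter : E₁ ∩ B = {b} := by
          apply Finset.Subset.antisymm
          · intro x hx
            obtain ⟨hx1, hx2⟩ := Finset.mem_inter.mp hx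
            have := hE₁D hx1
            rcases Finset.mem_insert.mp this with rfl | h
            · exact Finset.mem_singleton_self x
            · rcases Finset.mem_insert.mp h with rfl | h'
              · exact absurd hx2 hzB
              · exact absurd hx2 (fun hh => hBnA x hh (Finset.mem_of_mem_erase h'))
          · intro x hx
            rw [Finset.mem_singleton] at hx
            subst hx
            exact Finset.mem_inter.mpr ⟨hbe, hb⟩
        exact hno E₁ B hE₁card hB (by rw [hinter]; simp) hcE₁ hcB
      have hE₁eq : E₁ = insert z (A.erase a) := by
        apply Finset.eq_of_subset_of_card_le
        · intro x hx
          rcases Finset.mem_insert.mp (hE₁D hx) with rfl | h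
          · exact absurd hx hbE₁
          · exact h
        · rw [Finset.card_insert_of_notMem hza, Finset.card_erase_of_mem ha, hA, hE₁card]
          omega
      -- second auxiliary (r+1)-set
      have hzb : z ∉ B.erase b := fun h => hzB (Finset.mem_of_mem_erase h)
      have hains : a ∉ insert z (B.erase b) := by
        simp only [Finset.mem_insert]
        rintro (rfl | h)
        · exact haz rfl
        · exact haB (Finset.mem_of_mem_erase h)
      have hD₂ : (insert a (insert z (B.erase b))).card = r + 1 := by
        rw [Finset.card_insert_of_notMem hains, Finset.card_insert_of_notMem hzb,
          Finset.card_erase_of_mem hb, hB]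
        omega
      obtain ⟨E₂, hE₂D, hE₂card, hcE₂⟩ := redin _ hD₂
      have haE₂ : a ∉ E₂ := by
        intro hae
        have hinter : E₂ ∩ A = {a} := by
          apply Finset.Subset.antisymm
          · intro x hx
            obtain ⟨hx1, hx2⟩ := Finset.mem_inter.mp hx
            have := hE₂D hx1
            rcases Finset.mem_insert.mp this with rfl | h
            · exact Finset.mem_singleton_self x
            · rcases Finset.mem_insert.mp h with rfl | h'
              · exact absurd hx2 hzA
              · exact absurd hx2 (hBnA x (Finset.mem_of_mem_erase h'))
          · intro x hx
            rw [Finset.mem_singleton] at hx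
            subst hx
            exact Finset.mem_inter.mpr ⟨hae, ha⟩
        exact hno E₂ A hE₂card hA (by rw [hinter]; simp) hcE₂ hcA
      have hE₂eq : E₂ = insert z (B.erase b) := by
        apply Finset.eq_of_subset_of_card_le
        · intro x hx
          rcases Finset.mem_insert.mp (hE₂D hx) with rfl | h
          · exact absurd hx haE₂
          · exact h
        · rw [Finset.card_insert_of_notMem hzb, Finset.card_erase_of_mem hb, hB, hE₂card]
          omega
      -- E₁ and E₂ are red and meet in exactly {z}: contradiction
      have hfin : E₁ ∩ E₂ = {z} := by
        apply Finset.Subset.antisymm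
        · intro x hx
          obtain ⟨hx1, hx2⟩ := Finset.mem_inter.mp hx
          rw [hE₁eq] at hx1
          rw [hE₂eq] at hx2
          rcases Finset.mem_insert.mp hx1 with rfl | h
          · exact Finset.mem_singleton_self x
          · rcases Finset.mem_insert.mp hx2 with rfl | h'
            · exact Finset.mem_singleton_self x
            · exact absurd (Finset.mem_of_mem_erase h)
                (hBnA x (Finset.mem_of_mem_erase h'))
        · intro x hx
          rw [Finset.mem_singleton] at hx
          subst hx
          rw [hE₁eq, hE₂eq]
          exact Finset.mem_inter.mpr ⟨Finset.mem_insert_self _ _, Finset.mem_insert_self _ _⟩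
      exact hno E₁ E₂ hE₁card hE₂card (by rw [hfin]; simp) hcE₁ hcE₂
    obtain ⟨X, Y, hX, hY, hXY, hcX, hcY⟩ := key
    obtain ⟨f, hfinj, hf1, hf2⟩ := bridge e₁ e₂ h1 h2 hint hcover X Y hX hY hXY
    refine ⟨f, hfinj, ?_⟩
    rintro e (rfl | rfl)
    · rw [hf1]; exact hcX
    · rw [hf2]; exact hcY
  -- Lower bound: every good p satisfies p ≥ 2r.
  have hlow : ∀ p ∈ {p : ℕ | ∀ c : Finset (Fin p) → Bool,
      (∃ f : V → Fin p, Function.Injective f ∧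
        ∀ e ∈ ({e₁, e₂} : Set (Finset V)), c (e.image f) = true) ∨
      (∃ g : Fin (r + 1) → Fin p, Function.Injective g ∧
        ∀ e : Finset (Fin (r + 1)), e.card = r → c (e.image g) = false)}, 2 * r ≤ p := by
    intro p hp
    by_contra hlt
    push_neg at hlt
    rcases Nat.eq_zero_or_pos p with hp0 | hppos
    · subst hp0
      rcases hp (fun _ => true) with ⟨f, _, _⟩ | ⟨g, _, _⟩
      · obtain ⟨v, hv⟩ := Finset.card_eq_one.mp hint
        exact (f v).elim0
      · exact (g 0).elim0
    · set v0 : Fin p := ⟨0, hppos⟩ with hv0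
      set c : Finset (Fin p) → Bool := fun s => decide (v0 ∉ s) with hc
      rcases hp c with ⟨f, hf, hred⟩ | ⟨g, hg, hblue⟩
      · have hle : Fintype.card V ≤ p := by simpa using Fintype.card_le_of_injective f hf
        have himg : Finset.univ.image f = (Finset.univ : Finset (Fin p)) := by
          apply Finset.eq_univ_of_card
          rw [Finset.card_image_of_injective _ hf, Finset.card_univ, hcardV, Fintype.card_fin]
          omega
        have hv0im : v0 ∈ Finset.univ.image f := himg ▸ Finset.mem_univ v0
        obtain ⟨x, _, hx⟩ := Finset.mem_image.mp hv0im
        have hxu : x ∈ e₁ ∪ e₂ := hcover ▸ Finset.mem_univ x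
        rcases Finset.mem_union.mp hxu with h | h
        · have := hred e₁ (Or.inl rfl)
          rw [hc] at this
          simp only [decide_eq_true_eq] at this
          exact this (Finset.mem_image.mpr ⟨x, h, hx⟩)
        · have := hred e₂ (Or.inr rfl)
          rw [hc] at this
          simp only [decide_eq_true_eq] at this
          exact this (Finset.mem_image.mpr ⟨x, h, hx⟩)
      · by_cases hex : ∃ i, g i = v0
        · obtain ⟨i₀, hi₀⟩ := hex
          have he : ((Finset.univ : Finset (Fin (r + 1))).erase i₀).card = r := by
            rw [Finset.card_erase_of_mem (Finset.mem_univ i₀), Finset.card_univ,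
              Fintype.card_fin]
            omega
          have hbl := hblue _ he
          rw [hc] at hbl
          simp only [decide_eq_false_iff_not, not_not] at hbl
          obtain ⟨j, hj, hgj⟩ := Finset.mem_image.mp hbl
          exact (Finset.ne_of_mem_erase hj) (hg (hgj.trans hi₀.symm))
        · have he : ((Finset.univ : Finset (Fin (r + 1))).erase 0).card = r := by
            rw [Finset.card_erase_of_mem (Finset.mem_univ 0), Finset.card_univ,
              Fintype.card_fin]
            omega
          have hbl := hblue _ he
          rw [hc] at hbl
          simp only [decide_eq_false_iff_not, not_not] at hbl
          obtain ⟨j, _, hgj⟩ := Finset.mem_image.mp hbl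
          exact hex ⟨j, hgj⟩
  constructor
  · exact le_csInf ⟨2 * r + 1, hmem⟩ hlow
  · exact Nat.sInf_le hmem
end

section
/- If n ≥ r ≥ 2 and T_m^{(r)} is any r-uniform tree on m vertices, then R(T_m^{(r)}, K_n^{(r)}; r) ≤ (m−1)(n−1)/(r−1) + 1. -/
section Aux
variable {V : Type*} [DecidableEq V]

lemma subset_unionList {l : List (Finset V)} {e : Finset V} (he : e ∈ l) :
    e ⊆ l.foldr (· ∪ ·) ∅ := by
  induction l with
  | nil => simp at he
  | cons a l ih =>
    rcases List.mem_cons.1 he with h | h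
    · subst h; exact Finset.subset_union_left
    · exact (ih h).trans Finset.subset_union_right

lemma card_unionList {r : ℕ} (hr : 1 ≤ r) {l : List (Finset V)} (hl : IsTreeList r l) :
    (l.foldr (· ∪ ·) ∅).card = l.length * (r - 1) + 1 := by
  induction hl with
  | single e he => simp [he]; omega
  | cons e l hl he hint ih =>
    have h1 := Finset.card_union_add_card_inter e (l.foldr (· ∪ ·) ∅)
    simp only [List.foldr_cons, List.length_cons]
    rw [Nat.succ_mul]
    omega

lemma embed {r n p : ℕ} (hr : 2 ≤ r) (hn : r ≤ n) (c : Finset (Fin p) → Bool)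
    (hα : ∀ A : Finset (Fin p), (∀ e' ⊆ A, e'.card = r → c e' = false) → A.card ≤ n - 1)
    {l : List (Finset V)} (hl : IsTreeList r l) :
    ∀ S : Finset (Fin p), l.length * (n - 1) + 1 ≤ S.card →
    ∃ f : V → Fin p, Set.InjOn f ↑(l.foldr (· ∪ ·) ∅) ∧
      (∀ x ∈ l.foldr (· ∪ ·) ∅, f x ∈ S) ∧
      ∀ e ∈ l, c (e.image f) = true := by
  induction hl with
  | single e he =>
    intro S hS
    simp only [List.length_cons, List.length_nil, one_mul] at hS
    have hnotblue : ¬ (∀ e' ⊆ S, e'.card = r → c e' = false) := by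
      intro h
      have := hα S h
      omega
    push_neg at hnotblue
    obtain ⟨e', he'S, he'r, he'c⟩ := hnotblue
    rw [Bool.ne_false_iff] at he'c
    have hSne : S.Nonempty := Finset.card_pos.1 (by omega)
    obtain ⟨s₀, _⟩ := hSne
    have hcards : e.card = e'.card := by rw [he, he'r]
    let π := Finset.equivOfCardEq hcards
    have hinj : Set.InjOn (fun y => if h : y ∈ e then (π ⟨y, h⟩ : Fin p) else s₀) ↑e := by
      intro a ha b hb hab
      simp only [Finset.mem_coe] at ha hb
      simp only [dif_pos ha, dif_pos hb] at hab
      exact congrArg Subtype.val (π.injective (Subtype.coe_injective hab))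
    refine ⟨fun y => if h : y ∈ e then (π ⟨y, h⟩ : Fin p) else s₀, ?_, ?_, ?_⟩
    · simpa using hinj
    · intro y hy
      simp only [List.foldr_cons, List.foldr_nil, Finset.union_empty] at hy
      simp only [dif_pos hy]
      exact he'S (π ⟨y, hy⟩).2
    · intro e₀ he₀
      simp only [List.mem_cons, List.not_mem_nil, or_false] at he₀
      subst he₀
      have himg : e₀.image (fun y => if h : y ∈ e₀ then (π ⟨y, h⟩ : Fin p) else s₀) = e' := by
        apply Finset.eq_of_subset_of_card_le
        · intro z hz
          obtain ⟨y, hy, hyz⟩ := Finset.mem_image.1 hz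
          simp only [dif_pos hy] at hyz
          exact hyz ▸ (π ⟨y, hy⟩).2
        · rw [Finset.card_image_of_injOn hinj, he, he'r]
      rw [himg]; exact he'c
  | cons e l hl he hint ih =>
    intro S hS
    classical
    obtain ⟨u, hu⟩ := Finset.card_eq_one.1 hint
    have hu_mem : u ∈ e ∩ l.foldr (· ∪ ·) ∅ := hu ▸ Finset.mem_singleton_self u
    have hu_e : u ∈ e := (Finset.mem_inter.1 hu_mem).1
    have hu_U : u ∈ l.foldr (· ∪ ·) ∅ := (Finset.mem_inter.1 hu_mem).2
    -- choose a maximum-size blue clique `Q` inside `S`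
    set F := S.powerset.filter
      (fun A => ∀ e' ∈ A.powerset, e'.card = r → c e' = false) with hF
    have hFne : F.Nonempty := by
      refine ⟨∅, Finset.mem_filter.2 ⟨Finset.mem_powerset.2 (Finset.empty_subset S), ?_⟩⟩
      intro e' he' hcard
      rw [Finset.mem_powerset, Finset.subset_empty] at he'
      subst he'
      simp at hcard
      omega
    obtain ⟨Q, hQF, hQmax⟩ := F.exists_max_image Finset.card hFne
    have hQsub : Q ⊆ S := Finset.mem_powerset.1 (Finset.mem_filter.1 hQF).1
    have hQblue : ∀ e' ⊆ Q, e'.card = r → c e' = false := by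
      intro e' h1 h2
      exact (Finset.mem_filter.1 hQF).2 e' (Finset.mem_powerset.2 h1) h2
    have hQcard : Q.card ≤ n - 1 := hα Q hQblue
    have hScard : S.card ≤ (S \ Q).card + Q.card := by
      have h2 := Finset.card_sdiff_add_card_inter S Q
      have h3 : (S ∩ Q).card ≤ Q.card := Finset.card_le_card Finset.inter_subset_right
      omega
    have hS' : l.length * (n - 1) + 1 ≤ (S \ Q).card := by
      simp only [List.length_cons] at hS
      rw [Nat.succ_mul] at hS
      omega
    obtain ⟨f₀, hinj₀, hrange₀, hred₀⟩ := ih (S \ Q) hS'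
    have hxS' : f₀ u ∈ S \ Q := hrange₀ u hu_U
    have hxS : f₀ u ∈ S := (Finset.mem_sdiff.1 hxS').1
    have hxQ : f₀ u ∉ Q := (Finset.mem_sdiff.1 hxS').2
    -- by maximality, `Q ∪ {f₀ u}` contains a red edge, necessarily through `f₀ u`
    have hnotblue : ¬ (∀ e' ∈ (insert (f₀ u) Q).powerset, e'.card = r → c e' = false) := by
      intro hins
      have hmem : insert (f₀ u) Q ∈ F :=
        Finset.mem_filter.2 ⟨Finset.mem_powerset.2 (Finset.insert_subset hxS hQsub), hins⟩
      have hle := hQmax _ hmem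
      rw [Finset.card_insert_of_notMem hxQ] at hle
      omega
    push_neg at hnotblue
    obtain ⟨e', he'p, he'r, he'c⟩ := hnotblue
    rw [Bool.ne_false_iff] at he'c
    have he'sub : e' ⊆ insert (f₀ u) Q := Finset.mem_powerset.1 he'p
    have hx_e' : f₀ u ∈ e' := by
      by_contra hx'
      have hsubQ : e' ⊆ Q := by
        intro y hy
        rcases Finset.mem_insert.1 (he'sub hy) with h | h
        · exact absurd (h ▸ hy) hx'
        · exact h
      exact absurd (hQblue e' hsubQ he'r) (by rw [he'c]; simp)
    have hPsub : e'.erase (f₀ u) ⊆ Q := by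
      intro y hy
      have hyx := Finset.ne_of_mem_erase hy
      rcases Finset.mem_insert.1 (he'sub (Finset.mem_of_mem_erase hy)) with h | h
      · exact absurd h hyx
      · exact h
    have hDcard : (e.erase u).card = (e'.erase (f₀ u)).card := by
      rw [Finset.card_erase_of_mem hu_e, Finset.card_erase_of_mem hx_e', he, he'r]
    let π := Finset.equivOfCardEq hDcard
    set f : V → Fin p := fun y => if h : y ∈ e.erase u then (π ⟨y, h⟩ : Fin p) else f₀ y with hf
    have hfU : ∀ y ∈ l.foldr (· ∪ ·) ∅, f y = f₀ y := by
      intro y hy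
      have hyD : y ∉ e.erase u := by
        intro hyD
        have hye : y ∈ e := Finset.mem_of_mem_erase hyD
        have : y ∈ e ∩ l.foldr (· ∪ ·) ∅ := Finset.mem_inter.2 ⟨hye, hy⟩
        rw [hu] at this
        exact Finset.ne_of_mem_erase hyD (Finset.mem_singleton.1 this)
      simp only [hf, dif_neg hyD]
    have hfu : f u = f₀ u := by
      simp only [hf, dif_neg (Finset.notMem_erase u e)]
    have hfD : ∀ y (h : y ∈ e.erase u), f y ∈ e'.erase (f₀ u) := by
      intro y h
      simp only [hf, dif_pos h]
      exact (π ⟨y, h⟩).2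
    have hmem_e : ∀ y ∈ e, y ∉ e.erase u → y = u := by
      intro y hy hyD
      by_contra hne
      exact hyD (Finset.mem_erase.2 ⟨hne, hy⟩)
    -- injectivity on the head edge
    have hinj_e : Set.InjOn f ↑e := by
      intro a ha b hb hab
      simp only [Finset.mem_coe] at ha hb
      by_cases haD : a ∈ e.erase u <;> by_cases hbD : b ∈ e.erase u
      · simp only [hf, dif_pos haD, dif_pos hbD] at hab
        exact congrArg Subtype.val (π.injective (Subtype.coe_injective hab))
      · exfalso
        have hb' : b = u := hmem_e b hb hbD
        subst hb'
        exact Finset.ne_of_mem_erase (hfD a haD) (hab.trans hfu)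
      · exfalso
        have ha' : a = u := hmem_e a ha haD
        subst ha'
        exact Finset.ne_of_mem_erase (hfD b hbD) (hab.symm.trans hfu)
      · have ha' : a = u := hmem_e a ha haD
        have hb' : b = u := hmem_e b hb hbD
        rw [ha', hb']
    -- the image of the head edge is exactly e'
    have himg : e.image f = e' := by
      apply Finset.eq_of_subset_of_card_le
      · intro z hz
        obtain ⟨y, hy, hyz⟩ := Finset.mem_image.1 hz
        by_cases hyD : y ∈ e.erase u
        · exact hyz ▸ Finset.mem_of_mem_erase (hfD y hyD)
        · have : y = u := hmem_e y hy hyD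
          subst this
          rw [hfu] at hyz
          exact hyz ▸ hx_e'
      · rw [Finset.card_image_of_injOn hinj_e, he, he'r]
    refine ⟨f, ?_, ?_, ?_⟩
    · -- injectivity on e ∪ U
      intro a ha b hb hab
      simp only [List.foldr_cons, Finset.coe_union, Set.mem_union, Finset.mem_coe] at ha hb
      have hcase : ∀ y, (y ∈ e ∨ y ∈ l.foldr (· ∪ ·) ∅) →
          y ∈ e.erase u ∨ y ∈ l.foldr (· ∪ ·) ∅ := by
        intro y hy
        rcases hy with hy | hy
        · by_cases hyD : y ∈ e.erase u
          · exact Or.inl hyD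
          · exact Or.inr ((hmem_e y hy hyD) ▸ hu_U)
        · exact Or.inr hy
      rcases hcase a ha with haD | haU <;> rcases hcase b hb with hbD | hbU
      · simp only [hf, dif_pos haD, dif_pos hbD] at hab
        exact congrArg Subtype.val (π.injective (Subtype.coe_injective hab))
      · exfalso
        have h1 : f a ∈ Q := hPsub (hfD a haD)
        have h2 : f b ∈ S \ Q := by rw [hfU b hbU]; exact hrange₀ b hbU
        rw [hab] at h1
        exact (Finset.mem_sdiff.1 h2).2 h1
      · exfalso
        have h1 : f b ∈ Q := hPsub (hfD b hbD)
        have h2 : f a ∈ S \ Q := by rw [hfU a haU]; exact hrange₀ a haU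
        rw [← hab] at h1
        exact (Finset.mem_sdiff.1 h2).2 h1
      · rw [hfU a haU, hfU b hbU] at hab
        exact hinj₀ (Finset.mem_coe.2 haU) (Finset.mem_coe.2 hbU) hab
    · -- range
      intro y hy
      simp only [List.foldr_cons, Finset.mem_union] at hy
      rcases hy with hy | hy
      · by_cases hyD : y ∈ e.erase u
        · exact hQsub (hPsub (hfD y hyD))
        · have : y = u := hmem_e y hy hyD
          subst this
          rw [hfu]; exact hxS
      · rw [hfU y hy]
        exact (Finset.mem_sdiff.1 (hrange₀ y hy)).1
    · -- all edges are red
      intro e₀ he₀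
      rcases List.mem_cons.1 he₀ with h | h
      · subst h
        rw [himg]; exact he'c
      · have : e₀.image f = e₀.image f₀ :=
          Finset.image_congr (fun y hy => hfU y (subset_unionList h hy))
        rw [this]
        exact hred₀ e₀ h

end Aux

theorem stmt_13 (r n m : ℕ) (hr : 2 ≤ r) (hn : r ≤ n)
    {V : Type*} [Fintype V] [DecidableEq V]
    -- `T_m^{(r)}`: an `r`-uniform tree on the `m` vertices of `V`:
    (l : List (Finset V)) (hl : IsTreeList r l) (hcover : l.foldr (· ∪ ·) ∅ = Finset.univ)
    (hm : Fintype.card V = m) :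
    hRamsey {e | e ∈ l} r n ≤ (m - 1) * (n - 1) / (r - 1) + 1 := by
  classical
  have hcard : m = l.length * (r - 1) + 1 := by
    rw [← hm, ← Finset.card_univ, ← hcover, card_unionList (by omega) hl]
  have hdiv : (m - 1) * (n - 1) / (r - 1) = l.length * (n - 1) := by
    have h1 : (m - 1) * (n - 1) = (l.length * (n - 1)) * (r - 1) := by
      have : m - 1 = l.length * (r - 1) := by omega
      rw [this]; ring
    rw [h1, Nat.mul_div_cancel _ (by omega : 0 < r - 1)]
  rw [hdiv]
  unfold hRamsey
  apply Nat.sInf_le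
  intro c
  by_cases hb : ∃ A : Finset (Fin (l.length * (n - 1) + 1)),
      n ≤ A.card ∧ ∀ e' ⊆ A, e'.card = r → c e' = false
  · right
    obtain ⟨A, hA1, hA2⟩ := hb
    obtain ⟨B, hBA, hBcard⟩ := Finset.exists_subset_card_eq hA1
    let π := Finset.equivFinOfCardEq hBcard
    refine ⟨fun i => ((π.symm i : B) : Fin _), ?_, ?_⟩
    · intro i j hij
      have := Subtype.coe_injective hij
      exact π.symm.injective this
    · intro e her
      apply hA2
      · intro z hz
        obtain ⟨y, _, hyz⟩ := Finset.mem_image.1 hz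
        exact hBA (hyz ▸ (π.symm y).2)
      · rw [Finset.card_image_of_injective _ (fun i j hij => π.symm.injective (Subtype.coe_injective hij)), her]
  · left
    have hα : ∀ A : Finset (Fin (l.length * (n - 1) + 1)),
        (∀ e' ⊆ A, e'.card = r → c e' = false) → A.card ≤ n - 1 := by
      intro A hA
      by_contra hcardA
      exact hb ⟨A, by omega, hA⟩
    obtain ⟨f, hinj, _, hred⟩ := embed hr hn c hα hl Finset.univ
      (by rw [Finset.card_univ, Fintype.card_fin])
    refine ⟨f, ?_, ?_⟩
    · rw [hcover, Finset.coe_univ] at hinj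
      exact Set.injOn_univ.1 hinj
    · intro e hee
      exact hred e hee
end

section
/- For all n ≥ 3, the 3-uniform loose path P_5^{(3)} on 5 vertices satisfies R(P_5^{(3)}, K_n^{(3)}; 3) = 2n − 2 if n is even and 2n − 1 if n is odd. -/
/-- The 3-uniform loose path `P_5^{(3)}` on vertices `0, 1, 2, 3, 4` with hyperedges
`{0,1,2}` and `{2,3,4}`. -/
def P5 : Set (Finset ℕ) := {({0, 1, 2} : Finset ℕ), ({2, 3, 4} : Finset ℕ)}



def RP (n p : ℕ) : Prop := ∀ c : Finset (Fin p) → Bool,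
    (∃ f : ℕ → Fin p, Set.InjOn f ↑(Finset.range 5) ∧ ∀ e ∈ P5, c (e.image f) = true) ∨
    (∃ g : Fin n → Fin p, Function.Injective g ∧
      ∀ e : Finset (Fin n), e.card = 3 → c (e.image g) = false)

lemma exists_embed {p : ℕ} (e1 e2 : Finset (Fin p)) (h1 : e1.card = 3) (h2 : e2.card = 3)
    (hint : (e1 ∩ e2).card = 1) :
    ∃ f : ℕ → Fin p, Set.InjOn f ↑(Finset.range 5) ∧
      ({0, 1, 2} : Finset ℕ).image f = e1 ∧ ({2, 3, 4} : Finset ℕ).image f = e2 := by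
  obtain ⟨m, hm⟩ := Finset.card_eq_one.mp hint
  have hA : (e1 \ e2).card = 2 := by
    have := Finset.card_sdiff_add_card_inter e1 e2
    omega
  have hB : (e2 \ e1).card = 2 := by
    have h := Finset.card_sdiff_add_card_inter e2 e1
    rw [Finset.inter_comm] at h
    omega
  obtain ⟨a1, a2, ha, hAeq⟩ := Finset.card_eq_two.mp hA
  obtain ⟨b1, b2, hb, hBeq⟩ := Finset.card_eq_two.mp hB
  have hmm : m ∈ e1 ∩ e2 := by rw [hm]; exact Finset.mem_singleton_self m
  rw [Finset.mem_inter] at hmm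
  have ha1 : a1 ∈ e1 ∧ a1 ∉ e2 := by
    have : a1 ∈ e1 \ e2 := by rw [hAeq]; simp
    exact Finset.mem_sdiff.mp this
  have ha2 : a2 ∈ e1 ∧ a2 ∉ e2 := by
    have : a2 ∈ e1 \ e2 := by rw [hAeq]; simp
    exact Finset.mem_sdiff.mp this
  have hb1 : b1 ∈ e2 ∧ b1 ∉ e1 := by
    have : b1 ∈ e2 \ e1 := by rw [hBeq]; simp
    exact Finset.mem_sdiff.mp this
  have hb2 : b2 ∈ e2 ∧ b2 ∉ e1 := by
    have : b2 ∈ e2 \ e1 := by rw [hBeq]; simp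
    exact Finset.mem_sdiff.mp this
  have ha1m : a1 ≠ m := fun h => ha1.2 (h ▸ hmm.2)
  have ha2m : a2 ≠ m := fun h => ha2.2 (h ▸ hmm.2)
  have hb1m : b1 ≠ m := fun h => hb1.2 (h ▸ hmm.1)
  have hb2m : b2 ≠ m := fun h => hb2.2 (h ▸ hmm.1)
  have ha1b1 : a1 ≠ b1 := fun h => hb1.2 (h ▸ ha1.1)
  have ha1b2 : a1 ≠ b2 := fun h => hb2.2 (h ▸ ha1.1)
  have ha2b1 : a2 ≠ b1 := fun h => hb1.2 (h ▸ ha2.1)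
  have ha2b2 : a2 ≠ b2 := fun h => hb2.2 (h ▸ ha2.1)
  refine ⟨fun k => if k = 0 then a1 else if k = 1 then a2 else if k = 2 then m
    else if k = 3 then b1 else b2, ?_, ?_, ?_⟩
  · intro x hx y hy hxy
    simp only [Finset.coe_range, Set.mem_Iio] at hx hy
    interval_cases x <;> interval_cases y <;> simp_all
  · have he1 : e1 = insert a1 (insert a2 {m}) := by
      rw [← Finset.sdiff_union_inter e1 e2, hAeq, hm]
      ext x
      simp
      try tauto
    rw [he1]
    ext x
    simp
    try tauto
  · have he2 : e2 = insert m (insert b1 {b2}) := by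
      rw [← Finset.sdiff_union_inter e2 e1, hBeq, Finset.inter_comm, hm]
      ext x
      simp
      try tauto
    rw [he2]
    ext x
    simp
    try tauto

lemma RP_mono {n p q : ℕ} (h : p ≤ q) (hp : RP n p) : RP n q := by
  intro c
  have hinj : Function.Injective (Fin.castLE h) := Fin.castLE_injective h
  rcases hp (fun s => c (s.image (Fin.castLE h))) with ⟨f, finj, fcol⟩ | ⟨g, ginj, gcol⟩
  · refine Or.inl ⟨Fin.castLE h ∘ f, ?_, ?_⟩
    · intro x hx y hy hxy
      exact finj hx hy (hinj hxy)
    · intro e he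
      rw [← Finset.image_image]
      exact fcol e he
  · refine Or.inr ⟨Fin.castLE h ∘ g, hinj.comp ginj, ?_⟩
    · intro e he
      rw [← Finset.image_image]
      exact gcol e he

lemma key {p : ℕ} (c : Finset (Fin p) → Bool) (n : ℕ) :
    ∀ (V : Finset (Fin p)),
      2 * n - 2 + n % 2 ≤ V.card →
      (∀ e1 e2 : Finset (Fin p), e1 ⊆ V → e2 ⊆ V → e1.card = 3 → e2.card = 3 →
        c e1 = true → c e2 = true → (e1 ∩ e2).card ≠ 1) →
      ∃ B ⊆ V, B.card = n ∧ ∀ t ⊆ B, t.card = 3 → c t = false := by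
  induction n using Nat.strong_induction_on with
  | _ n IH =>
  intro V hcard hP5
  rcases le_or_gt n 2 with h2 | h3
  · obtain ⟨B, hBV, hB⟩ := Finset.exists_subset_card_eq (s := V) (n := n) (by omega)
    exact ⟨B, hBV, hB, fun t ht hct => absurd (Finset.card_le_card ht) (by omega)⟩
  by_cases hred : ∃ e ⊆ V, e.card = 3 ∧ c e = true
  · obtain ⟨e1, he1V, he1c, he1r⟩ := hred
    by_cases h2e : ∃ e2 ⊆ V, e2.card = 3 ∧ c e2 = true ∧ (e1 ∩ e2).card = 2
    · -- case: two red triples sharing two vertices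
      obtain ⟨e2, he2V, he2c, he2r, hint⟩ := h2e
      set Q := e1 ∪ e2 with hQ
      have hQV : Q ⊆ V := Finset.union_subset he1V he2V
      have hQcard : Q.card = 4 := by
        have h := Finset.card_union_add_card_inter e1 e2
        rw [← hQ] at h
        omega
      have hu : ∃ u, u ∈ e1 \ e2 := by
        apply Finset.card_pos.mp
        have := Finset.card_sdiff_add_card_inter e1 e2
        omega
      have hv : ∃ v, v ∈ e2 \ e1 := by
        apply Finset.card_pos.mp
        have h := Finset.card_sdiff_add_card_inter e2 e1
        rw [Finset.inter_comm] at h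
        omega
      obtain ⟨u, hu⟩ := hu
      obtain ⟨v, hv⟩ := hv
      rw [Finset.mem_sdiff] at hu hv
      obtain ⟨B, hBV, hBcard, hBblue⟩ := IH (n - 2) (by omega) (V \ Q)
        (by
          rw [Finset.card_sdiff_of_subset hQV, hQcard]
          omega)
        (fun a b haV hbV => hP5 a b (haV.trans (Finset.sdiff_subset)) (hbV.trans (Finset.sdiff_subset)))
      have hBnotQ : ∀ x ∈ B, x ∉ Q := fun x hx => (Finset.mem_sdiff.mp (hBV hx)).2
      have huv : u ≠ v := fun h => hv.2 (h ▸ hu.1)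
      have huB : u ∉ B := fun h => hBnotQ u h (Finset.mem_union_left _ hu.1)
      have hvB : v ∉ B := fun h => hBnotQ v h (Finset.mem_union_right _ hv.1)
      refine ⟨insert u (insert v B), ?_, ?_, ?_⟩
      · intro x hx
        rcases Finset.mem_insert.mp hx with rfl | hx
        · exact hQV (Finset.mem_union_left _ hu.1)
        rcases Finset.mem_insert.mp hx with rfl | hx
        · exact hQV (Finset.mem_union_right _ hv.1)
        · exact (Finset.mem_sdiff.mp (hBV hx)).1
      · rw [Finset.card_insert_of_notMem, Finset.card_insert_of_notMem hvB, hBcard]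
        · omega
        · simp only [Finset.mem_insert]
          rintro (rfl | h)
          · exact huv rfl
          · exact huB h
      · intro t ht htcard
        cases hct : c t with
        | false => rfl
        | true =>
        exfalso
        have htV : t ⊆ V := by
          intro x hx
          have := ht hx
          rcases Finset.mem_insert.mp this with rfl | h
          · exact hQV (Finset.mem_union_left _ hu.1)
          rcases Finset.mem_insert.mp h with rfl | h
          · exact hQV (Finset.mem_union_right _ hv.1)
          · exact (Finset.mem_sdiff.mp (hBV h)).1
        by_cases hut : u ∈ t
        · -- t ∩ e1 = {u}
          have : t ∩ e1 = {u} := by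
            apply Finset.Subset.antisymm
            · intro x hx
              rw [Finset.mem_inter] at hx
              rcases Finset.mem_insert.mp (ht hx.1) with rfl | h
              · exact Finset.mem_singleton_self x
              rcases Finset.mem_insert.mp h with rfl | h
              · exact absurd hx.2 hv.2
              · exact absurd hx.2 (fun hc => hBnotQ x h (Finset.mem_union_left _ hc))
            · intro x hx
              rw [Finset.mem_singleton] at hx
              subst hx
              exact Finset.mem_inter.mpr ⟨hut, hu.1⟩
          exact hP5 t e1 htV he1V htcard he1c hct he1r (by rw [this]; simp)
        by_cases hvt : v ∈ t
        · have : t ∩ e2 = {v} := by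
            apply Finset.Subset.antisymm
            · intro x hx
              rw [Finset.mem_inter] at hx
              rcases Finset.mem_insert.mp (ht hx.1) with rfl | h
              · exact absurd hx.2 hu.2
              rcases Finset.mem_insert.mp h with rfl | h
              · exact Finset.mem_singleton_self x
              · exact absurd hx.2 (fun hc => hBnotQ x h (Finset.mem_union_right _ hc))
            · intro x hx
              rw [Finset.mem_singleton] at hx
              subst hx
              exact Finset.mem_inter.mpr ⟨hvt, hv.1⟩
          exact hP5 t e2 htV he2V htcard he2c hct he2r (by rw [this]; simp)
        · have htB : t ⊆ B := by
            intro x hx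
            rcases Finset.mem_insert.mp (ht hx) with rfl | h
            · exact absurd hx hut
            rcases Finset.mem_insert.mp h with rfl | h
            · exact absurd hx hvt
            · exact h
          rw [hBblue t htB htcard] at hct
          exact Bool.false_ne_true hct
    · -- star case: no red triple shares exactly two vertices with e1
      obtain ⟨u, v, hu1, hv1, huv⟩ := Finset.one_lt_card_iff.mp (by omega : 1 < e1.card)
      obtain ⟨B, hBV, hBcard, hBblue⟩ := IH (n - 2) (by omega) (V \ e1)
        (by
          rw [Finset.card_sdiff_of_subset he1V, he1c]
          omega)
        (fun a b haV hbV => hP5 a b (haV.trans Finset.sdiff_subset) (hbV.trans Finset.sdiff_subset))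
      have hBnot : ∀ x ∈ B, x ∉ e1 := fun x hx => (Finset.mem_sdiff.mp (hBV hx)).2
      have huB : u ∉ B := fun h => hBnot u h hu1
      have hvB : v ∉ B := fun h => hBnot v h hv1
      refine ⟨insert u (insert v B), ?_, ?_, ?_⟩
      · intro x hx
        rcases Finset.mem_insert.mp hx with rfl | hx
        · exact he1V hu1
        rcases Finset.mem_insert.mp hx with rfl | hx
        · exact he1V hv1
        · exact (Finset.mem_sdiff.mp (hBV hx)).1
      · rw [Finset.card_insert_of_notMem, Finset.card_insert_of_notMem hvB, hBcard]
        · omega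
        · simp only [Finset.mem_insert]
          rintro (rfl | h)
          · exact huv rfl
          · exact huB h
      · intro t ht htcard
        cases hct : c t with
        | false => rfl
        | true =>
        exfalso
        have htV : t ⊆ V := by
          intro x hx
          rcases Finset.mem_insert.mp (ht hx) with rfl | h
          · exact he1V hu1
          rcases Finset.mem_insert.mp h with rfl | h
          · exact he1V hv1
          · exact (Finset.mem_sdiff.mp (hBV h)).1
        by_cases hut : u ∈ t <;> by_cases hvt : v ∈ t
        · -- both: t ∩ e1 = {u, v}, contradicts h2e
          have hint : e1 ∩ t = {u, v} := by
            apply Finset.Subset.antisymm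
            · intro x hx
              rw [Finset.mem_inter] at hx
              rcases Finset.mem_insert.mp (ht hx.2) with rfl | h
              · simp
              rcases Finset.mem_insert.mp h with rfl | h
              · simp
              · exact absurd hx.1 (hBnot x h)
            · intro x hx
              rcases Finset.mem_insert.mp hx with rfl | hx
              · exact Finset.mem_inter.mpr ⟨hu1, hut⟩
              · rw [Finset.mem_singleton] at hx; subst hx
                exact Finset.mem_inter.mpr ⟨hv1, hvt⟩
          exact h2e ⟨t, htV, htcard, hct, by rw [hint]; rw [Finset.card_insert_of_notMem (by simpa using huv), Finset.card_singleton]⟩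
        · have : t ∩ e1 = {u} := by
            apply Finset.Subset.antisymm
            · intro x hx
              rw [Finset.mem_inter] at hx
              rcases Finset.mem_insert.mp (ht hx.1) with rfl | h
              · exact Finset.mem_singleton_self x
              rcases Finset.mem_insert.mp h with rfl | h
              · exact absurd hx.1 hvt
              · exact absurd hx.2 (hBnot x h)
            · intro x hx
              rw [Finset.mem_singleton] at hx; subst hx
              exact Finset.mem_inter.mpr ⟨hut, hu1⟩
          exact hP5 t e1 htV he1V htcard he1c hct he1r (by rw [this]; simp)
        · have : t ∩ e1 = {v} := by
            apply Finset.Subset.antisymm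
            · intro x hx
              rw [Finset.mem_inter] at hx
              rcases Finset.mem_insert.mp (ht hx.1) with rfl | h
              · exact absurd hx.1 hut
              rcases Finset.mem_insert.mp h with rfl | h
              · exact Finset.mem_singleton_self x
              · exact absurd hx.2 (hBnot x h)
            · intro x hx
              rw [Finset.mem_singleton] at hx; subst hx
              exact Finset.mem_inter.mpr ⟨hvt, hv1⟩
          exact hP5 t e1 htV he1V htcard he1c hct he1r (by rw [this]; simp)
        · have htB : t ⊆ B := by
            intro x hx
            rcases Finset.mem_insert.mp (ht hx) with rfl | h
            · exact absurd hx hut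
            rcases Finset.mem_insert.mp h with rfl | h
            · exact absurd hx hvt
            · exact h
          rw [hBblue t htB htcard] at hct
          exact Bool.false_ne_true hct
  · -- no red triple at all
    obtain ⟨B, hBV, hB⟩ := Finset.exists_subset_card_eq (s := V) (n := n) (by omega)
    refine ⟨B, hBV, hB, fun t ht htcard => ?_⟩
    cases hct : c t with
    | false => rfl
    | true => exact absurd ⟨t, ht.trans hBV, htcard, hct⟩ hred

lemma RP_upper (n : ℕ) : RP n (2 * n - 2 + n % 2) := by
  intro c
  by_cases hred : ∃ f : ℕ → Fin (2 * n - 2 + n % 2), Set.InjOn f ↑(Finset.range 5) ∧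
      ∀ e ∈ P5, c (e.image f) = true
  · exact Or.inl hred
  · right
    have hP5 : ∀ e1 e2 : Finset (Fin (2 * n - 2 + n % 2)), e1 ⊆ Finset.univ → e2 ⊆ Finset.univ →
        e1.card = 3 → e2.card = 3 → c e1 = true → c e2 = true → (e1 ∩ e2).card ≠ 1 := by
      intro e1 e2 _ _ h1 h2 hr1 hr2 hint
      obtain ⟨f, finj, hf1, hf2⟩ := exists_embed e1 e2 h1 h2 hint
      refine hred ⟨f, finj, ?_⟩
      rintro e (rfl | rfl)
      · rw [hf1]; exact hr1
      · rw [hf2]; exact hr2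
    obtain ⟨B, _, hBcard, hBblue⟩ := key c n Finset.univ (by simp) hP5
    refine ⟨B.orderEmbOfFin hBcard, (B.orderEmbOfFin hBcard).injective, ?_⟩
    intro e he
    apply hBblue
    · intro x hx
      obtain ⟨i, _, rfl⟩ := Finset.mem_image.mp hx
      exact Finset.orderEmbOfFin_mem B hBcard i
    · rw [Finset.card_image_of_injective _ (B.orderEmbOfFin hBcard).injective, he]

lemma RP_lower (n : ℕ) (hn : 3 ≤ n) : ¬ RP n (2 * n - 3 + n % 2) := by
  intro hRP
  set q := 2 * n - 3 + n % 2 with hq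
  set c : Finset (Fin q) → Bool :=
    fun s => decide (∀ x ∈ s, ∀ y ∈ s, (x : ℕ) / 4 = (y : ℕ) / 4) with hc
  rcases hRP c with ⟨f, finj, fcol⟩ | ⟨g, ginj, gcol⟩
  · -- no red P5
    have h1 := fcol ({0, 1, 2} : Finset ℕ) (by left; rfl)
    have h2 := fcol ({2, 3, 4} : Finset ℕ) (by right; rfl)
    have h1' := of_decide_eq_true h1
    have h2' := of_decide_eq_true h2
    have hmem1 : ∀ i ∈ ({0, 1, 2} : Finset ℕ), f i ∈ ({0, 1, 2} : Finset ℕ).image f :=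
      fun i hi => Finset.mem_image_of_mem f hi
    have hmem2 : ∀ i ∈ ({2, 3, 4} : Finset ℕ), f i ∈ ({2, 3, 4} : Finset ℕ).image f :=
      fun i hi => Finset.mem_image_of_mem f hi
    have hsame : ∀ i ∈ Finset.range 5, (f i : ℕ) / 4 = (f 2 : ℕ) / 4 := by
      intro i hi
      rw [Finset.mem_range] at hi
      interval_cases i
      · exact h1' _ (hmem1 0 (by decide)) _ (hmem1 2 (by decide))
      · exact h1' _ (hmem1 1 (by decide)) _ (hmem1 2 (by decide))
      · rfl
      · exact h2' _ (hmem2 3 (by decide)) _ (hmem2 2 (by decide))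
      · exact h2' _ (hmem2 4 (by decide)) _ (hmem2 2 (by decide))
    obtain ⟨i, hi, j, hj, hij, hmod⟩ :=
      Finset.exists_ne_map_eq_of_card_lt_of_maps_to
        (show (Finset.range 4).card < (Finset.range 5).card by simp)
        (fun i _ => Finset.mem_range.mpr (Nat.mod_lt (f i : ℕ) (by norm_num)))
    have hval : (f i : ℕ) = (f j : ℕ) := by
      have d1 := hsame i hi
      have d2 := hsame j hj
      omega
    exact hij (finj (Finset.mem_coe.mpr hi) (Finset.mem_coe.mpr hj) (Fin.val_injective hval))
  · -- no blue K_n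
    have hfib : ∀ b : ℕ, (Finset.univ.filter (fun i : Fin n => (g i : ℕ) / 4 = b)).card ≤ 2 := by
      intro b
      by_contra hcon
      push_neg at hcon
      obtain ⟨t, htsub, htcard⟩ := Finset.exists_subset_card_eq (show 3 ≤ _ from hcon)
      have : c (t.image g) = true := by
        apply decide_eq_true
        intro x hx y hy
        obtain ⟨i, hi, rfl⟩ := Finset.mem_image.mp hx
        obtain ⟨j, hj, rfl⟩ := Finset.mem_image.mp hy
        have hib := (Finset.mem_filter.mp (htsub hi)).2
        have hjb := (Finset.mem_filter.mp (htsub hj)).2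
        rw [hib, hjb]
      rw [gcol t htcard] at this
      exact Bool.false_ne_true this
    rcases Nat.even_or_odd n with he | ho
    · -- n even, n = 2m, q = 4m - 3
      obtain ⟨m, hm⟩ := he
      have hm2 : 2 ≤ m := by omega
      have hqval : q = 4 * m - 3 := by omega
      have hmap : ∀ i : Fin n, i ∈ Finset.univ → (g i : ℕ) / 4 ∈ Finset.range m := by
        intro i _
        rw [Finset.mem_range]
        have := (g i).isLt
        omega
      have hsum := Finset.card_eq_sum_card_fiberwise hmap
      rw [Finset.card_univ, Fintype.card_fin] at hsum
      rw [show m = (m - 1) + 1 by omega, Finset.sum_range_succ] at hsum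
      have hb1 : ∑ b ∈ Finset.range (m - 1),
          (Finset.univ.filter (fun i : Fin n => (g i : ℕ) / 4 = b)).card ≤ (m - 1) * 2 := by
        rw [← Finset.card_range (m - 1)]
        rw [Finset.card_range]
        calc ∑ b ∈ Finset.range (m - 1), (Finset.univ.filter (fun i : Fin n => (g i : ℕ) / 4 = b)).card
            ≤ ∑ _b ∈ Finset.range (m - 1), 2 := Finset.sum_le_sum (fun b _ => hfib b)
          _ = (m - 1) * 2 := by rw [Finset.sum_const, Finset.card_range, smul_eq_mul]
      have hb2 : (Finset.univ.filter (fun i : Fin n => (g i : ℕ) / 4 = m - 1)).card ≤ 1 := by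
        by_contra hcon
        push_neg at hcon
        obtain ⟨a, ha, b, hb, hab⟩ := Finset.one_lt_card.mp hcon
        have ha' := (Finset.mem_filter.mp ha).2
        have hb' := (Finset.mem_filter.mp hb).2
        have hla := (g a).isLt
        have hlb := (g b).isLt
        have : (g a : ℕ) = (g b : ℕ) := by omega
        exact hab (ginj (Fin.val_injective this))
      omega
    · -- n odd, n = 2m+1, q = 4m
      obtain ⟨m, hm⟩ := ho
      have hm1 : 1 ≤ m := by omega
      have hqval : q = 4 * m := by omega
      have hmap : ∀ i : Fin n, i ∈ Finset.univ → (g i : ℕ) / 4 ∈ Finset.range m := by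
        intro i _
        rw [Finset.mem_range]
        have := (g i).isLt
        omega
      have hsum := Finset.card_eq_sum_card_fiberwise hmap
      rw [Finset.card_univ, Fintype.card_fin] at hsum
      have hb1 : ∑ b ∈ Finset.range m,
          (Finset.univ.filter (fun i : Fin n => (g i : ℕ) / 4 = b)).card ≤ m * 2 := by
        calc ∑ b ∈ Finset.range m, (Finset.univ.filter (fun i : Fin n => (g i : ℕ) / 4 = b)).card
            ≤ ∑ _b ∈ Finset.range m, 2 := Finset.sum_le_sum (fun b _ => hfib b)
          _ = m * 2 := by rw [Finset.sum_const, Finset.card_range, smul_eq_mul]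
      omega

theorem stmt_16 (n : ℕ) (hn : 3 ≤ n) :
    hRamseyOn 3 (Finset.range 5) P5 n = if Even n then 2 * n - 2 else 2 * n - 1 := by
  have hset : hRamseyOn 3 (Finset.range 5) P5 n = sInf {p | RP n p} := rfl
  have hNval : (if Even n then 2 * n - 2 else 2 * n - 1) = 2 * n - 2 + n % 2 := by
    rcases Nat.even_or_odd n with h | h
    · have h2 := Nat.even_iff.mp h
      rw [if_pos h]
      omega
    · have h2 := Nat.odd_iff.mp h
      rw [if_neg (Nat.not_even_iff_odd.mpr h)]
      omega
  rw [hset, hNval]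
  apply le_antisymm
  · exact Nat.sInf_le (RP_upper n)
  · apply le_csInf ⟨_, RP_upper n⟩
    intro m hm
    by_contra hlt
    push_neg at hlt
    exact RP_lower n hn (RP_mono (by omega) hm)
end
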